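/- arXiv:1106.1054 — 8 statements merged into one kernel-verified Lean document; each statement's English description precedes it below -/
import Mathlib

section
/- Let m and n be natural numbers with m ≥ 2, n ≥ 2 and gcd(m,n) = 1. Then ∑_{d ∣ m·n} μ(d)·(log d)² = 2·Λ(m)·Λ(n). -/
open ArithmeticFunction
open scoped ArithmeticFunction.Moebius

lemma golomb_sum_divisors_coprime_mul {m n : ℕ} (hm : m ≠ 0) (hn : n ≠ 0)
    (hmn : Nat.Coprime m n) (f : ℕ → ℝ) :
    ∑ d ∈ (m * n).divisors, f d = ∑ a ∈ m.divisors, ∑ b ∈ n.divisors, f (a * b) := by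
  rw [← Finset.sum_product']
  refine Finset.sum_nbij' (fun d => (d.gcd m, d.gcd n)) (fun p => p.1 * p.2) ?_ ?_ ?_ ?_ ?_
  · intro d hd
    rw [Nat.mem_divisors] at hd
    simp only [Finset.mem_product, Nat.mem_divisors]
    exact ⟨⟨Nat.gcd_dvd_right _ _, hm⟩, ⟨Nat.gcd_dvd_right _ _, hn⟩⟩
  · intro p hp
    simp only [Finset.mem_product, Nat.mem_divisors] at hp
    exact Nat.mem_divisors.mpr ⟨mul_dvd_mul hp.1.1 hp.2.1, mul_ne_zero hm hn⟩
  · intro d hd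
    rw [Nat.mem_divisors] at hd
    exact (Nat.gcd_mul_gcd_eq_iff_dvd_mul_of_coprime hmn).mpr hd.1
  · intro p hp
    simp only [Finset.mem_product, Nat.mem_divisors] at hp
    have hbm : Nat.Coprime p.2 m := (hmn.symm.coprime_dvd_left hp.2.1)
    have han : Nat.Coprime p.1 n := (hmn.coprime_dvd_left hp.1.1)
    have h1 : Nat.gcd (p.1 * p.2) m = p.1 := by
      rw [hbm.gcd_mul_right_cancel p.1]
      exact Nat.gcd_eq_left hp.1.1
    have h2 : Nat.gcd (p.1 * p.2) n = p.2 := by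
      rw [han.gcd_mul_left_cancel p.2]
      exact Nat.gcd_eq_left hp.2.1
    simp [h1, h2]
  · intro d hd
    rw [Nat.mem_divisors] at hd
    congr 1
    exact ((Nat.gcd_mul_gcd_eq_iff_dvd_mul_of_coprime hmn).mpr hd.1).symm

lemma golomb_sum_moebius_eq_zero {k : ℕ} (hk : 2 ≤ k) :
    ∑ d ∈ k.divisors, (ArithmeticFunction.moebius d : ℝ) = 0 := by
  have h := congrArg (fun f : ArithmeticFunction ℤ => f k)
    ArithmeticFunction.moebius_mul_coe_zeta
  simp only [ArithmeticFunction.coe_mul_zeta_apply, ArithmeticFunction.one_apply] at h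
  rw [if_neg (by omega)] at h
  exact_mod_cast h

theorem golomb_identity (m n : ℕ) (hm : 2 ≤ m) (hn : 2 ≤ n) (hmn : Nat.Coprime m n) :
    ∑ d ∈ (m * n).divisors, (ArithmeticFunction.moebius d : ℝ) * (Real.log d) ^ 2 =
      2 * ArithmeticFunction.vonMangoldt m * ArithmeticFunction.vonMangoldt n := by
  have hm0 : m ≠ 0 := by omega
  have hn0 : n ≠ 0 := by omega
  rw [golomb_sum_divisors_coprime_mul hm0 hn0 hmn]
  have key : ∀ a ∈ m.divisors, ∀ b ∈ n.divisors,
      (μ (a * b) : ℝ) * (Real.log ((a * b : ℕ) : ℝ)) ^ 2 =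
        (μ a : ℝ) * (Real.log a) ^ 2 * (μ b : ℝ)
        + 2 * (((μ a : ℝ) * Real.log a) * ((μ b : ℝ) * Real.log b))
        + (μ a : ℝ) * ((μ b : ℝ) * (Real.log b) ^ 2) := by
    intro a ha b hb
    rw [Nat.mem_divisors] at ha hb
    have ha0 : a ≠ 0 := fun h => hm0 (zero_dvd_iff.mp (h ▸ ha.1))
    have hb0 : b ≠ 0 := fun h => hn0 (zero_dvd_iff.mp (h ▸ hb.1))
    have hab : Nat.Coprime a b := Nat.Coprime.coprime_dvd_left ha.1
      (hmn.coprime_dvd_right hb.1)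
    have hmu : (μ (a * b) : ℝ) = (μ a : ℝ) * (μ b : ℝ) := by
      rw [ArithmeticFunction.isMultiplicative_moebius.map_mul_of_coprime hab]
      push_cast
      ring
    have hlog : Real.log (a * b : ℕ) = Real.log a + Real.log b := by
      push_cast
      exact Real.log_mul (Nat.cast_ne_zero.mpr ha0) (Nat.cast_ne_zero.mpr hb0)
    rw [hmu, hlog]
    ring
  rw [Finset.sum_congr rfl fun a ha => Finset.sum_congr rfl fun b hb => key a ha b hb]
  simp only [Finset.sum_add_distrib, ← Finset.mul_sum, ← Finset.sum_mul]
  rw [golomb_sum_moebius_eq_zero hn, golomb_sum_moebius_eq_zero hm,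
    show ∑ d ∈ m.divisors, (μ d : ℝ) * Real.log d = _ from
      ArithmeticFunction.sum_moebius_mul_log_eq,
    show ∑ d ∈ n.divisors, (μ d : ℝ) * Real.log d = _ from
      ArithmeticFunction.sum_moebius_mul_log_eq]
  ring
end

section
/- For every complex number s with Re(s) > 1, the series ∑_{n=1}^∞ (∑_{d ∣ n} μ(d)·(log d)²)/n^s converges absolutely, and its sum equals 2·(ζ'(s)/ζ(s))² − ζ''(s)/ζ(s), where ζ'' denotes the second derivative of the Riemann zeta function. (Note ζ(s) ≠ 0 for Re(s) > 1, and the n = 1 term vanishes.) -/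
open ArithmeticFunction

open Complex LSeries Filter in
theorem Z_series_eq (s : ℂ) (hs : 1 < s.re) :
    Summable (fun n : ℕ =>
      ‖((∑ d ∈ n.divisors, (ArithmeticFunction.moebius d : ℝ) * (Real.log d) ^ 2 : ℝ) : ℂ) /
        (n : ℂ) ^ s‖) ∧
    ∑' n : ℕ, ((∑ d ∈ n.divisors,
        (ArithmeticFunction.moebius d : ℝ) * (Real.log d) ^ 2 : ℝ) : ℂ) / (n : ℂ) ^ s =
      2 * (deriv riemannZeta s / riemannZeta s) ^ 2 -
        iteratedDeriv 2 riemannZeta s / riemannZeta s := by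
  open scoped LSeries.notation in
  have hs1 : s ≠ 1 := fun h => by simp [h] at hs
  have hζ0 : riemannZeta s ≠ 0 := riemannZeta_ne_zero_of_one_lt_re hs
  have hμ : abscissaOfAbsConv ↗ArithmeticFunction.moebius < s.re := by
    rw [ArithmeticFunction.abscissaOfAbsConv_moebius]
    exact_mod_cast hs
  set F : ℕ → ℂ := logMul^[2] ↗ArithmeticFunction.moebius with hFdef
  have hFabs : abscissaOfAbsConv F < s.re := by
    rw [hFdef, LSeries.absicssaOfAbsConv_logPowMul]; exact hμ
  have h1 : LSeriesSummable F s := LSeriesSummable_of_abscissaOfAbsConv_lt_re hFabs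
  have h2 : LSeriesSummable 1 s := LSeriesSummable_one_iff.mpr hs
  have hconv : LSeriesSummable (F ⍟ 1) s := h1.convolution h2
  -- identify the terms
  have hterm : ∀ n : ℕ,
      ((∑ d ∈ n.divisors, (ArithmeticFunction.moebius d : ℝ) * (Real.log d) ^ 2 : ℝ) : ℂ) /
        (n : ℂ) ^ s = term (F ⍟ 1) s n := by
    intro n
    rcases eq_or_ne n 0 with rfl | hn
    · simp
    · rw [term_of_ne_zero hn, convolution_def]
      congr 1
      show _ = ∑ p ∈ n.divisorsAntidiagonal, F p.1 * (1 : ℕ → ℂ) p.2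
      rw [Nat.sum_divisorsAntidiagonal (fun a b => F a * (1 : ℕ → ℂ) b)]
      push_cast
      refine Finset.sum_congr rfl fun d _ => ?_
      simp only [hFdef, Function.iterate_succ, Function.iterate_zero, Function.comp_apply,
        id_eq, logMul, Pi.one_apply, mul_one, ← natCast_log]
      push_cast
      ring
  have hsum : Summable fun n : ℕ =>
      ‖((∑ d ∈ n.divisors, (ArithmeticFunction.moebius d : ℝ) * (Real.log d) ^ 2 : ℝ) : ℂ) /
        (n : ℂ) ^ s‖ := by
    simpa only [hterm] using hconv.norm
  refine ⟨hsum, ?_⟩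
  -- the tsum equals L(F) * ζ(s)
  have htsum : ∑' n : ℕ, ((∑ d ∈ n.divisors,
      (ArithmeticFunction.moebius d : ℝ) * (Real.log d) ^ 2 : ℝ) : ℂ) / (n : ℂ) ^ s =
      LSeries F s * riemannZeta s := by
    calc ∑' n : ℕ, ((∑ d ∈ n.divisors,
          (ArithmeticFunction.moebius d : ℝ) * (Real.log d) ^ 2 : ℝ) : ℂ) / (n : ℂ) ^ s
        = LSeries (F ⍟ 1) s := by rw [LSeries]; exact tsum_congr hterm
      _ = LSeries F s * LSeries 1 s := LSeries_convolution' h1 h2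
      _ = LSeries F s * riemannZeta s := by rw [LSeries_one_eq_riemannZeta hs]
  -- L(F) = second derivative of L(μ) = second derivative of ζ⁻¹
  have hLF : LSeries F s = iteratedDeriv 2 (LSeries ↗ArithmeticFunction.moebius) s := by
    rw [LSeries_iteratedDeriv 2 hμ, hFdef]
    norm_num
  have hU : IsOpen {z : ℂ | 1 < z.re} := isOpen_lt continuous_const continuous_re
  have hne1 : ∀ z ∈ {z : ℂ | 1 < z.re}, z ≠ (1 : ℂ) := by
    intro z hz h; rw [h] at hz; simp at hz
  have hμζ : ∀ z ∈ {z : ℂ | 1 < z.re},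
      LSeries ↗ArithmeticFunction.moebius z = (riemannZeta z)⁻¹ := by
    intro z hz
    have h := LSeries_one_mul_Lseries_moebius (s := z) hz
    rw [LSeries_one_eq_riemannZeta hz] at h
    field_simp [riemannZeta_ne_zero_of_one_lt_re hz] at h ⊢
    linear_combination h
  have hev : LSeries ↗ArithmeticFunction.moebius =ᶠ[nhds s] fun z => (riemannZeta z)⁻¹ :=
    eventuallyEq_of_mem (hU.mem_nhds hs) hμζ
  have hiter : iteratedDeriv 2 (LSeries ↗ArithmeticFunction.moebius) s =
      deriv (deriv fun z => (riemannZeta z)⁻¹) s := by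
    rw [iteratedDeriv_succ, iteratedDeriv_one]
    exact hev.deriv.deriv.eq_of_nhds
  -- analyticity of ζ on the half-plane
  have hdiff : DifferentiableOn ℂ riemannZeta {z : ℂ | 1 < z.re} :=
    fun z hz => (differentiableAt_riemannZeta (hne1 z hz)).differentiableWithinAt
  have han : AnalyticOnNhd ℂ riemannZeta {z : ℂ | 1 < z.re} := hdiff.analyticOnNhd hU
  have hζd : HasDerivAt riemannZeta (deriv riemannZeta s) s :=
    (differentiableAt_riemannZeta hs1).hasDerivAt
  have hζ'd : HasDerivAt (deriv riemannZeta) (iteratedDeriv 2 riemannZeta s) s := by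
    rw [iteratedDeriv_succ, iteratedDeriv_one]
    exact ((han.deriv s hs).differentiableAt).hasDerivAt
  -- first derivative of ζ⁻¹ on the half-plane
  have hd1 : ∀ z ∈ {z : ℂ | 1 < z.re},
      deriv (fun z => (riemannZeta z)⁻¹) z = -deriv riemannZeta z / riemannZeta z ^ 2 := by
    intro z hz
    exact deriv_inv'' (differentiableAt_riemannZeta (hne1 z hz))
      (riemannZeta_ne_zero_of_one_lt_re hz)
  have hev1 : deriv (fun z => (riemannZeta z)⁻¹) =ᶠ[nhds s]
      fun z => -deriv riemannZeta z / riemannZeta z ^ 2 :=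
    eventuallyEq_of_mem (hU.mem_nhds hs) hd1
  -- second derivative
  have hg : HasDerivAt (fun z => -deriv riemannZeta z / riemannZeta z ^ 2)
      ((-(iteratedDeriv 2 riemannZeta s) * riemannZeta s ^ 2 -
        (-deriv riemannZeta s) * (2 * riemannZeta s ^ 1 * deriv riemannZeta s)) /
        (riemannZeta s ^ 2) ^ 2) s := by
    exact HasDerivAt.div hζ'd.neg (hζd.pow 2) (pow_ne_zero 2 hζ0)
  have hd2 : deriv (deriv fun z => (riemannZeta z)⁻¹) s =
      (-(iteratedDeriv 2 riemannZeta s) * riemannZeta s ^ 2 -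
        (-deriv riemannZeta s) * (2 * riemannZeta s ^ 1 * deriv riemannZeta s)) /
        (riemannZeta s ^ 2) ^ 2 := by
    rw [hev1.deriv_eq]
    exact hg.deriv
  rw [htsum, hLF, hiter, hd2]
  field_simp
  ring
end

section
/- Define Z(s) := 2·(ζ'(s)/ζ(s))² − ζ''(s)/ζ(s). Let s be a complex number that is not an integer and such that ζ(s) ≠ 0 and ζ(1−s) ≠ 0. Then Z(1−s) + ψ'(s) − (π/2)²/cos²(πs/2) = Z(s) + (ψ(s) − log(2π) − (π/2)·tan(πs/2))² + 2·(ζ'(s)/ζ(s))·(ψ(s) − log(2π) − (π/2)·tan(πs/2)), where ψ(s) = Γ'(s)/Γ(s) is the logarithmic derivative of the Gamma function and ψ'(s) is its derivative. -/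
/-- `Z(s) = 2 (ζ'(s)/ζ(s))² − ζ''(s)/ζ(s)`. -/
noncomputable def Zfun (s : ℂ) : ℂ :=
  2 * (deriv riemannZeta s / riemannZeta s) ^ 2 -
    iteratedDeriv 2 riemannZeta s / riemannZeta s

/-- `ψ(s) = Γ'(s)/Γ(s)`, the logarithmic derivative of the Gamma function. -/
noncomputable def psiFun (s : ℂ) : ℂ := deriv Complex.Gamma s / Complex.Gamma s

open Complex Filter Topology

lemma isOpen_nonInt : IsOpen {z : ℂ | ∀ n : ℤ, z ≠ (n : ℂ)} := by
  have h1 : {z : ℂ | ∀ n : ℤ, z ≠ (n : ℂ)} = (Set.range ((↑) : ℤ → ℂ))ᶜ := by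
    ext z
    simp [Set.mem_range, not_exists, eq_comm]
  rw [h1, isOpen_compl_iff]
  have h2 : Set.range ((↑) : ℤ → ℂ) = Complex.ofReal '' Set.range ((↑) : ℤ → ℝ) := by
    ext z
    constructor
    · rintro ⟨n, rfl⟩; exact ⟨n, ⟨n, rfl⟩, by push_cast; ring⟩
    · rintro ⟨x, ⟨n, rfl⟩, rfl⟩; exact ⟨n, by push_cast; ring⟩
  rw [h2]
  exact (Complex.isometry_ofReal.isClosedEmbedding.isClosedMap _
    Int.isClosedEmbedding_coe_real.isClosed_range)

lemma nonInt_nat_neg {t : ℂ} (ht : ∀ n : ℤ, t ≠ (n : ℂ)) : ∀ n : ℕ, t ≠ -(n : ℂ) :=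
  fun n => by simpa using ht (-n)

lemma cos_ne_zero_of_nonInt {t : ℂ} (ht : ∀ n : ℤ, t ≠ (n : ℂ)) :
    Complex.cos ((Real.pi : ℂ) * t / 2) ≠ 0 := by
  have hπ : (Real.pi : ℂ) ≠ 0 := by exact_mod_cast Real.pi_ne_zero
  rw [Ne, Complex.cos_eq_zero_iff]
  rintro ⟨k, hk⟩
  apply ht (2 * k + 1)
  have h : (Real.pi : ℂ) * t = (Real.pi : ℂ) * ((2 * k + 1 : ℤ) : ℂ) := by
    push_cast
    linear_combination 2 * hk
  exact mul_left_cancel₀ hπ h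

lemma analyticOnNhd_zeta : AnalyticOnNhd ℂ riemannZeta {z : ℂ | z ≠ 1} :=
  DifferentiableOn.analyticOnNhd
    (fun _ hw => (differentiableAt_riemannZeta hw).differentiableWithinAt) isOpen_ne

lemma analyticOnNhd_Gamma : AnalyticOnNhd ℂ Complex.Gamma {z : ℂ | ∀ n : ℤ, z ≠ (n : ℂ)} :=
  DifferentiableOn.analyticOnNhd
    (fun w hw => (Complex.differentiableAt_Gamma w (nonInt_nat_neg hw)).differentiableWithinAt)
    isOpen_nonInt

lemma logDeriv_FE {t : ℂ} (ht : ∀ n : ℤ, t ≠ (n : ℂ))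
    (h1 : riemannZeta t ≠ 0) (h2 : riemannZeta (1 - t) ≠ 0) :
    deriv riemannZeta (1 - t) / riemannZeta (1 - t) =
      Complex.log (2 * (Real.pi : ℂ)) - psiFun t +
        ((Real.pi : ℂ) / 2) * Complex.tan ((Real.pi : ℂ) * t / 2) -
        deriv riemannZeta t / riemannZeta t := by
  have hπ : (Real.pi : ℂ) ≠ 0 := by exact_mod_cast Real.pi_ne_zero
  have h2π : (2 * (Real.pi : ℂ)) ≠ 0 := by simp [hπ]
  have ht1 : t ≠ 1 := by simpa using ht 1
  have ht0 : t ≠ 0 := by simpa using ht 0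
  have htnat : ∀ n : ℕ, t ≠ -(n : ℂ) := nonInt_nat_neg ht
  have hΓ : Complex.Gamma t ≠ 0 := Complex.Gamma_ne_zero htnat
  have hcos : Complex.cos ((Real.pi : ℂ) * t / 2) ≠ 0 := cos_ne_zero_of_nonInt ht
  set L : ℂ := Complex.log (2 * (Real.pi : ℂ)) with hLdef
  set G : ℂ → ℂ := fun x =>
    2 * Complex.exp (L * -x) * Complex.Gamma x * Complex.cos ((Real.pi : ℂ) * x / 2) *
      riemannZeta x with hG
  have hEq : (fun x => riemannZeta (1 - x)) =ᶠ[𝓝 t] G := by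
    filter_upwards [isOpen_nonInt.mem_nhds ht] with x hx
    have hx1 : x ≠ 1 := by simpa using hx 1
    have hxnat : ∀ n : ℕ, x ≠ -(n : ℂ) := nonInt_nat_neg hx
    rw [riemannZeta_one_sub hxnat hx1, hG]
    rw [Complex.cpow_def_of_ne_zero h2π]
  have hE : HasDerivAt (fun x : ℂ => Complex.exp (L * -x)) (Complex.exp (L * -t) * -L) t := by
    have hi : HasDerivAt (fun x : ℂ => L * -x) (-L) t := by
      simpa using ((hasDerivAt_id t).neg.const_mul L)
    exact (Complex.hasDerivAt_exp _).comp t hi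
  have hC : HasDerivAt (fun x : ℂ => Complex.cos ((Real.pi : ℂ) * x / 2))
      (-Complex.sin ((Real.pi : ℂ) * t / 2) * ((Real.pi : ℂ) / 2)) t := by
    have hi : HasDerivAt (fun x : ℂ => (Real.pi : ℂ) * x / 2) ((Real.pi : ℂ) / 2) t := by
      simpa using (((hasDerivAt_id t).const_mul (Real.pi : ℂ)).div_const 2)
    exact (Complex.hasDerivAt_cos _).comp t hi
  have hΓd : DifferentiableAt ℂ Complex.Gamma t := Complex.differentiableAt_Gamma t htnat
  have hζd : DifferentiableAt ℂ riemannZeta t := differentiableAt_riemannZeta ht1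
  have hEne : Complex.exp (L * -t) ≠ 0 := Complex.exp_ne_zero _
  have hlog : logDeriv (fun x => riemannZeta (1 - x)) t = logDeriv G t := by
    simp only [logDeriv, Pi.div_apply]
    rw [hEq.deriv_eq, hEq.eq_of_nhds]
  have hLside : logDeriv (fun x => riemannZeta (1 - x)) t
      = -(deriv riemannZeta (1 - t) / riemannZeta (1 - t)) := by
    have h1t : (1 : ℂ) - t ≠ 1 := fun h => ht0 (by linear_combination -h)
    have hc : (fun x : ℂ => riemannZeta (1 - x)) = riemannZeta ∘ (fun x : ℂ => 1 - x) := rfl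
    rw [hc, logDeriv_comp (differentiableAt_riemannZeta h1t) (by fun_prop)]
    have hd : deriv (fun x : ℂ => 1 - x) t = -1 := by
      simpa using ((hasDerivAt_id t).const_sub (1 : ℂ)).deriv
    rw [hd, logDeriv_apply]
    ring
  have hstep1 : logDeriv G t
      = logDeriv (fun x : ℂ => 2 * Complex.exp (L * -x) * Complex.Gamma x *
          Complex.cos ((Real.pi : ℂ) * x / 2)) t + logDeriv riemannZeta t := by
    rw [hG]
    exact logDeriv_mul t (by simp [hEne, hΓ, hcos]) h1
      (((differentiableAt_const _).mul hE.differentiableAt).mul hΓd |>.mul hC.differentiableAt) hζd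
  have hstep2 : logDeriv (fun x : ℂ => 2 * Complex.exp (L * -x) * Complex.Gamma x *
          Complex.cos ((Real.pi : ℂ) * x / 2)) t
      = logDeriv (fun x : ℂ => 2 * Complex.exp (L * -x) * Complex.Gamma x) t +
        logDeriv (fun x : ℂ => Complex.cos ((Real.pi : ℂ) * x / 2)) t :=
    logDeriv_mul t (by simp [hEne, hΓ]) hcos
      (((differentiableAt_const _).mul hE.differentiableAt).mul hΓd) hC.differentiableAt
  have hstep3 : logDeriv (fun x : ℂ => 2 * Complex.exp (L * -x) * Complex.Gamma x) t
      = logDeriv (fun x : ℂ => 2 * Complex.exp (L * -x)) t + logDeriv Complex.Gamma t :=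
    logDeriv_mul t (by simp [hEne]) hΓ
      ((differentiableAt_const _).mul hE.differentiableAt) hΓd
  have hstep4 : logDeriv (fun x : ℂ => 2 * Complex.exp (L * -x)) t
      = logDeriv (fun x : ℂ => Complex.exp (L * -x)) t :=
    logDeriv_const_mul t 2 two_ne_zero
  have hval1 : logDeriv (fun x : ℂ => Complex.exp (L * -x)) t = -L := by
    rw [logDeriv_apply, hE.deriv]
    field_simp
  have hval2 : logDeriv Complex.Gamma t = psiFun t := rfl
  have hval3 : logDeriv (fun x : ℂ => Complex.cos ((Real.pi : ℂ) * x / 2)) t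
      = -(((Real.pi : ℂ) / 2) * Complex.tan ((Real.pi : ℂ) * t / 2)) := by
    rw [logDeriv_apply, hC.deriv, Complex.tan_eq_sin_div_cos]
    field_simp
  have hval4 : logDeriv riemannZeta t = deriv riemannZeta t / riemannZeta t := rfl
  rw [hLside, hstep1, hstep2, hstep3, hstep4, hval1, hval2, hval3, hval4] at hlog
  linear_combination -hlog

lemma alg_lemma (a a1 a2 b b1 b2 p p1 c T C K : ℂ) (ha : a ≠ 0) (hb : b ≠ 0)
    (E1 : a1 / a = c - p + K * T - b1 / b)
    (E2 : (a2 * -1 * a - a1 * (a1 * -1)) / a ^ 2 =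
      -p1 + K * (1 / C ^ 2 * K) - (b2 * b - b1 * b1) / b ^ 2) :
    (2 * (a1 / a) ^ 2 - a2 / a) + p1 - K ^ 2 / C ^ 2 =
      (2 * (b1 / b) ^ 2 - b2 / b) + (p - c - K * T) ^ 2 +
        2 * (b1 / b) * (p - c - K * T) := by
  have hx : a1 / a = -((p - c - K * T) + b1 / b) := by linear_combination E1
  have h2' : (a2 * -1 * a - a1 * (a1 * -1)) / a ^ 2 = (a1 / a) ^ 2 - a2 / a := by
    field_simp
    ring
  have h3' : (b2 * b - b1 * b1) / b ^ 2 = b2 / b - (b1 / b) ^ 2 := by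
    field_simp
  rw [h2', h3'] at E2
  linear_combination E2 + (a1 / a - (p - c - K * T) - b1 / b) * hx

theorem Z_functional_equation (s : ℂ) (hs : ∀ n : ℤ, s ≠ (n : ℂ))
    (h1 : riemannZeta s ≠ 0) (h2 : riemannZeta (1 - s) ≠ 0) :
    Zfun (1 - s) + deriv psiFun s -
        ((Real.pi : ℂ) / 2) ^ 2 / Complex.cos ((Real.pi : ℂ) * s / 2) ^ 2 =
      Zfun s +
        (psiFun s - Complex.log (2 * (Real.pi : ℂ)) -
            ((Real.pi : ℂ) / 2) * Complex.tan ((Real.pi : ℂ) * s / 2)) ^ 2 +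
        2 * (deriv riemannZeta s / riemannZeta s) *
          (psiFun s - Complex.log (2 * (Real.pi : ℂ)) -
            ((Real.pi : ℂ) / 2) * Complex.tan ((Real.pi : ℂ) * s / 2)) := by
  have hs1 : s ≠ 1 := by simpa using hs 1
  have hs0 : s ≠ 0 := by simpa using hs 0
  have hs1' : (1 : ℂ) - s ≠ 1 := fun h => hs0 (by linear_combination -h)
  have hsnat : ∀ n : ℕ, s ≠ -(n : ℂ) := nonInt_nat_neg hs
  have hΓs : Complex.Gamma s ≠ 0 := Complex.Gamma_ne_zero hsnat
  have hcos : Complex.cos ((Real.pi : ℂ) * s / 2) ≠ 0 := cos_ne_zero_of_nonInt hs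
  have hdz : DifferentiableAt ℂ (deriv riemannZeta) s :=
    ((analyticOnNhd_zeta.deriv) s hs1).differentiableAt
  have hdz' : DifferentiableAt ℂ (deriv riemannZeta) (1 - s) :=
    ((analyticOnNhd_zeta.deriv) _ hs1').differentiableAt
  have hdΓ : DifferentiableAt ℂ (deriv Complex.Gamma) s :=
    ((analyticOnNhd_Gamma.deriv) s hs).differentiableAt
  have hψd : DifferentiableAt ℂ psiFun s := by
    have hrw : psiFun = fun z => deriv Complex.Gamma z / Complex.Gamma z := rfl
    rw [hrw]
    exact hdΓ.div (Complex.differentiableAt_Gamma s hsnat) hΓs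
  -- eventual equality of log-derivative functional equation
  have hζc : ContinuousAt riemannZeta s := (differentiableAt_riemannZeta hs1).continuousAt
  have hζc2 : ContinuousAt (fun t : ℂ => riemannZeta (1 - t)) s := by
    have : DifferentiableAt ℂ (fun t : ℂ => riemannZeta (1 - t)) s :=
      (differentiableAt_riemannZeta hs1').comp s (by fun_prop)
    exact this.continuousAt
  have hev : (fun t : ℂ => deriv riemannZeta (1 - t) / riemannZeta (1 - t)) =ᶠ[𝓝 s]
      (fun t : ℂ => Complex.log (2 * (Real.pi : ℂ)) - psiFun t +
        ((Real.pi : ℂ) / 2) * Complex.tan ((Real.pi : ℂ) * t / 2) -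
        deriv riemannZeta t / riemannZeta t) := by
    filter_upwards [isOpen_nonInt.mem_nhds hs, hζc.eventually_ne h1, hζc2.eventually_ne h2]
      with x hx hx1 hx2
    exact logDeriv_FE hx hx1 hx2
  -- derivative of LHS
  have hinner : HasDerivAt (fun t : ℂ => 1 - t) (-1) s := by
    simpa using ((hasDerivAt_id s).const_sub (1 : ℂ))
  have hnum : HasDerivAt (fun t : ℂ => deriv riemannZeta (1 - t))
      (deriv (deriv riemannZeta) (1 - s) * -1) s := hdz'.hasDerivAt.comp s hinner
  have hden : HasDerivAt (fun t : ℂ => riemannZeta (1 - t))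
      (deriv riemannZeta (1 - s) * -1) s :=
    (differentiableAt_riemannZeta hs1').hasDerivAt.comp s hinner
  have hLd : HasDerivAt (fun t : ℂ => deriv riemannZeta (1 - t) / riemannZeta (1 - t))
      ((deriv (deriv riemannZeta) (1 - s) * -1 * riemannZeta (1 - s) -
          deriv riemannZeta (1 - s) * (deriv riemannZeta (1 - s) * -1)) /
        riemannZeta (1 - s) ^ 2) s := hnum.div hden h2
  -- derivative of RHS
  have hti : HasDerivAt (fun t : ℂ => (Real.pi : ℂ) * t / 2) ((Real.pi : ℂ) / 2) s := by
    simpa using (((hasDerivAt_id s).const_mul (Real.pi : ℂ)).div_const 2)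
  have htand : HasDerivAt
      (fun t : ℂ => ((Real.pi : ℂ) / 2) * Complex.tan ((Real.pi : ℂ) * t / 2))
      (((Real.pi : ℂ) / 2) *
        (1 / Complex.cos ((Real.pi : ℂ) * s / 2) ^ 2 * ((Real.pi : ℂ) / 2))) s :=
    ((Complex.hasDerivAt_tan hcos).comp s hti).const_mul _
  have hzd : HasDerivAt (fun t : ℂ => deriv riemannZeta t / riemannZeta t)
      ((deriv (deriv riemannZeta) s * riemannZeta s -
          deriv riemannZeta s * deriv riemannZeta s) / riemannZeta s ^ 2) s :=
    hdz.hasDerivAt.div (differentiableAt_riemannZeta hs1).hasDerivAt h1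
  have hRd : HasDerivAt (fun t : ℂ => Complex.log (2 * (Real.pi : ℂ)) - psiFun t +
        ((Real.pi : ℂ) / 2) * Complex.tan ((Real.pi : ℂ) * t / 2) -
        deriv riemannZeta t / riemannZeta t)
      ((-(deriv psiFun s) +
          ((Real.pi : ℂ) / 2) *
            (1 / Complex.cos ((Real.pi : ℂ) * s / 2) ^ 2 * ((Real.pi : ℂ) / 2))) -
        (deriv (deriv riemannZeta) s * riemannZeta s -
          deriv riemannZeta s * deriv riemannZeta s) / riemannZeta s ^ 2) s :=
    ((hψd.hasDerivAt.const_sub _).add htand).sub hzd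
  have hE2 : (deriv (deriv riemannZeta) (1 - s) * -1 * riemannZeta (1 - s) -
        deriv riemannZeta (1 - s) * (deriv riemannZeta (1 - s) * -1)) /
      riemannZeta (1 - s) ^ 2 =
      (-(deriv psiFun s) +
          ((Real.pi : ℂ) / 2) *
            (1 / Complex.cos ((Real.pi : ℂ) * s / 2) ^ 2 * ((Real.pi : ℂ) / 2))) -
        (deriv (deriv riemannZeta) s * riemannZeta s -
          deriv riemannZeta s * deriv riemannZeta s) / riemannZeta s ^ 2 := by
    have h := hev.deriv_eq
    rw [hLd.deriv, hRd.deriv] at h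
    exact h
  have hE1 := logDeriv_FE hs h1 h2
  have hit2 : iteratedDeriv 2 riemannZeta = deriv (deriv riemannZeta) := by
    rw [iteratedDeriv_succ, iteratedDeriv_one]
  simp only [Zfun, hit2]
  exact alg_lemma (riemannZeta (1 - s)) (deriv riemannZeta (1 - s))
    (deriv (deriv riemannZeta) (1 - s)) (riemannZeta s) (deriv riemannZeta s)
    (deriv (deriv riemannZeta) s) (psiFun s) (deriv psiFun s)
    (Complex.log (2 * (Real.pi : ℂ))) (Complex.tan ((Real.pi : ℂ) * s / 2))
    (Complex.cos ((Real.pi : ℂ) * s / 2)) ((Real.pi : ℂ) / 2) h2 h1 hE1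
    (by linear_combination hE2)
end

section
/- Let D be a positive odd integer. Then, as the real number σ tends to 1/2 from above, (σ − 1/2) · ∑_{a=⌊D/2⌋+1}^∞ (4a² − D²)^{−σ} tends to 1/4. In other words, the constraint Dirichlet series Q_D has a simple pole at s = 1/2 with residue 1/4. -/
open Filter Real Set Topology

theorem QD_simple_pole_half (D : ℕ) (hD : 0 < D) (hodd : Odd D) :
    Filter.Tendsto (fun σ : ℝ => (σ - 1 / 2) *
        ∑' a : ℕ, (4 * ((a + D / 2 + 1 : ℕ) : ℝ) ^ 2 - (D : ℝ) ^ 2) ^ (-σ))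
      (nhdsWithin (1 / 2) (Set.Ioi (1 / 2))) (nhds (1 / 4)) := by
  obtain ⟨m, hm2⟩ : ∃ m, D = 2 * m + 1 := by
    obtain ⟨k, hk⟩ := hodd; exact ⟨k, by omega⟩
  have hDm : D / 2 = m := by omega
  set c : ℝ := (D : ℝ) with hc
  have hcm : c = 2 * (m : ℝ) + 1 := by rw [hc, hm2]; push_cast; ring
  set x : ℕ → ℝ := fun a => ((a + D / 2 + 1 : ℕ) : ℝ) with hx
  have hxval : ∀ a, x a = (a : ℝ) + (m : ℝ) + 1 := fun a => by
    simp only [hx, hDm]; push_cast; ring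
  set A : ℕ → ℝ := fun a => 4 * (x a) ^ 2 - c ^ 2 with hA
  have hA_eq : ∀ a, A a = (2 * (a:ℝ) + 1) * (2 * (a:ℝ) + 4 * (m:ℝ) + 3) := by
    intro a; simp only [hA, hxval a, hcm]; ring
  have hA_lb : ∀ a : ℕ, ((a:ℝ) + 1) ^ 2 ≤ A a := by
    intro a; rw [hA_eq a]
    have h1 : (0:ℝ) ≤ (a:ℝ) := Nat.cast_nonneg a
    have h2 : (0:ℝ) ≤ (m:ℝ) := Nat.cast_nonneg m
    nlinarith
  have hA_pos : ∀ a : ℕ, (0:ℝ) < A a := fun a =>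
    lt_of_lt_of_le (by positivity) (hA_lb a)
  have hA1 : ∀ a : ℕ, (1:ℝ) ≤ A a := fun a =>
    le_trans (by nlinarith [Nat.cast_nonneg (α := ℝ) a]) (hA_lb a)
  have hx_pos : ∀ a : ℕ, (0:ℝ) < x a := fun a => by rw [hxval a]; positivity
  have hA_le : ∀ a : ℕ, A a ≤ 4 * (x a) ^ 2 := fun a => by
    simp only [hA]; nlinarith [sq_nonneg c]
  have hB_lb : ∀ a : ℕ, ((a:ℝ) + 1) ^ 2 ≤ 4 * (x a) ^ 2 :=
    fun a => le_trans (hA_lb a) (hA_le a)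
  -- helper : (y^2)^(-σ) = y^(-(2σ))
  have hsq : ∀ (y σ : ℝ), 0 ≤ y → (y ^ 2) ^ (-σ) = y ^ (-(2*σ)) := by
    intro y σ hy
    rw [← Real.rpow_natCast y 2, ← Real.rpow_mul hy]
    norm_num
  -- summable comparison series
  have hcomp : ∀ σ : ℝ, 1/2 < σ → Summable (fun a : ℕ => (((a:ℝ)+1) ^ 2) ^ (-σ)) := by
    intro σ hσ
    have h1 : Summable (fun n : ℕ => (n:ℝ) ^ (-(2*σ))) :=
      Real.summable_nat_rpow.2 (by linarith)
    have h2 := (summable_nat_add_iff 1).2 h1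
    refine h2.congr fun a => ?_
    rw [hsq _ _ (by positivity)]; push_cast; ring_nf
  have hf_le : ∀ (σ : ℝ) (a : ℕ), 1/2 < σ → (A a) ^ (-σ) ≤ (((a:ℝ)+1) ^ 2) ^ (-σ) :=
    fun σ a hσ => Real.rpow_le_rpow_of_nonpos (by positivity) (hA_lb a) (by linarith)
  have hg_le : ∀ (σ : ℝ) (a : ℕ), 1/2 < σ → (4 * (x a) ^ 2) ^ (-σ) ≤ (((a:ℝ)+1) ^ 2) ^ (-σ) :=
    fun σ a hσ => Real.rpow_le_rpow_of_nonpos (by positivity) (hB_lb a) (by linarith)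
  have hf_sum : ∀ σ : ℝ, 1/2 < σ → Summable (fun a : ℕ => (A a) ^ (-σ)) := by
    intro σ hσ
    exact (hcomp σ hσ).of_nonneg_of_le (fun a => Real.rpow_nonneg (hA_pos a).le _)
      (fun a => hf_le σ a hσ)
  have hg_sum : ∀ σ : ℝ, 1/2 < σ → Summable (fun a : ℕ => (4 * (x a) ^ 2) ^ (-σ)) := by
    intro σ hσ
    exact (hcomp σ hσ).of_nonneg_of_le (fun a => Real.rpow_nonneg (by positivity) _)
      (fun a => hg_le σ a hσ)
  -- names
  set Z : ℝ → ℝ := fun t => ∑' n : ℕ, (n:ℝ) ^ (-t) with hZ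
  set P : ℝ → ℝ := fun σ => ∑ i ∈ Finset.range (m+1), (i:ℝ) ^ (-(2*σ)) with hP
  set H : ℝ → ℝ := fun σ => ∑' a : ℕ, ((A a) ^ (-σ) - (4 * (x a) ^ 2) ^ (-σ)) with hH
  -- g-term rewriting
  have hg_eq : ∀ (σ : ℝ) (a : ℕ),
      (4 * (x a) ^ 2) ^ (-σ) = (2:ℝ) ^ (-(2*σ)) * ((a + (m+1) : ℕ) : ℝ) ^ (-(2*σ)) := by
    intro σ a
    have h1 : 4 * (x a) ^ 2 = (2 * x a) ^ 2 := by ring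
    rw [h1, hsq _ _ (by positivity), Real.mul_rpow (by norm_num) (hx_pos a).le]
    congr 2
    rw [hxval a]; push_cast; ring
  -- tsum of g
  have htsum_g : ∀ σ : ℝ, 1/2 < σ →
      ∑' a : ℕ, (4 * (x a) ^ 2) ^ (-σ) = (2:ℝ) ^ (-(2*σ)) * (Z (2*σ) - P σ) := by
    intro σ hσ
    have hFsum : Summable (fun n : ℕ => (n:ℝ) ^ (-(2*σ))) :=
      Real.summable_nat_rpow.2 (by linarith)
    have hshift := Summable.sum_add_tsum_nat_add (f := fun n : ℕ => (n:ℝ) ^ (-(2*σ))) (m+1) hFsum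
    calc ∑' a : ℕ, (4 * (x a) ^ 2) ^ (-σ)
        = ∑' a : ℕ, (2:ℝ) ^ (-(2*σ)) * ((a + (m+1) : ℕ) : ℝ) ^ (-(2*σ)) := by
          exact tsum_congr fun a => hg_eq σ a
      _ = (2:ℝ) ^ (-(2*σ)) * ∑' a : ℕ, ((a + (m+1) : ℕ) : ℝ) ^ (-(2*σ)) := tsum_mul_left
      _ = (2:ℝ) ^ (-(2*σ)) * (Z (2*σ) - P σ) := by
          rw [hZ, hP]
          congr 1
          have : ∑' a : ℕ, ((a + (m+1) : ℕ) : ℝ) ^ (-(2*σ))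
              = ∑' a : ℕ, (((a + (m+1) : ℕ)):ℝ) ^ (-(2*σ)) := rfl
          push_cast at hshift ⊢
          linarith [hshift]
  -- split of the main sum
  have hsplit : ∀ σ : ℝ, 1/2 < σ →
      ∑' a : ℕ, (A a) ^ (-σ)
        = (2:ℝ) ^ (-(2*σ)) * (Z (2*σ) - P σ) + H σ := by
    intro σ hσ
    have h1 : Summable (fun a : ℕ => ((A a) ^ (-σ) - (4 * (x a) ^ 2) ^ (-σ))) :=
      (hf_sum σ hσ).sub (hg_sum σ hσ)
    rw [← htsum_g σ hσ, hH]
    rw [← Summable.tsum_add (hg_sum σ hσ) h1]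
    exact tsum_congr fun a => by ring
  -- Limit 1 : (σ - 1/2) * Z (2σ) → 1/2
  have T1 : Tendsto (fun σ : ℝ => (σ - 1/2) * Z (2*σ)) (𝓝[>] (1/2 : ℝ)) (𝓝 (1/2)) := by
    have hmap : Tendsto (fun σ : ℝ => 2*σ) (𝓝[>] (1/2 : ℝ)) (𝓝[>] (1:ℝ)) := by
      apply tendsto_nhdsWithin_of_tendsto_nhds_of_eventually_within
      · have h1 : Tendsto (fun σ : ℝ => 2*σ) (𝓝 (1/2:ℝ)) (𝓝 (2 * (1/2:ℝ))) :=
          (continuous_const.mul continuous_id).tendsto (1/2 : ℝ)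
        norm_num at h1
        exact h1.mono_left nhdsWithin_le_nhds
      · filter_upwards [self_mem_nhdsWithin] with y hy
        simp only [mem_Ioi] at hy ⊢; linarith
    have h0 := tendsto_sub_mul_tsum_nat_rpow.comp hmap
    have h1 : Tendsto (fun σ : ℝ => (2*σ - 1) * Z (2*σ)) (𝓝[>] (1/2:ℝ)) (𝓝 1) := by
      refine h0.congr fun σ => ?_
      simp only [Function.comp_apply, hZ]
      congr 1
      exact tsum_congr fun n => by
        rw [Real.rpow_neg (Nat.cast_nonneg n), one_div]
    have h2 := h1.const_mul (1/2 : ℝ)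
    simp only [mul_one] at h2
    refine h2.congr fun σ => by ring
  -- Limit 2 : (σ-1/2) * P σ → 0
  have T2 : Tendsto (fun σ : ℝ => (σ - 1/2) * P σ) (𝓝[>] (1/2 : ℝ)) (𝓝 0) := by
    apply squeeze_zero' (g := fun σ : ℝ => (σ - 1/2) * (m+1))
    · filter_upwards [self_mem_nhdsWithin] with σ hσ
      simp only [mem_Ioi] at hσ
      have hPpos : 0 ≤ P σ :=
        Finset.sum_nonneg fun i _ => Real.rpow_nonneg (Nat.cast_nonneg i) _
      exact mul_nonneg (by linarith) hPpos
    · filter_upwards [self_mem_nhdsWithin] with σ hσ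
      simp only [mem_Ioi] at hσ
      have hPle : P σ ≤ (m+1 : ℝ) := by
        rw [hP]
        calc ∑ i ∈ Finset.range (m+1), (i:ℝ) ^ (-(2*σ))
            ≤ ∑ _i ∈ Finset.range (m+1), (1:ℝ) := by
              apply Finset.sum_le_sum
              intro i _
              rcases Nat.eq_zero_or_pos i with h | h
              · subst h
                rw [Nat.cast_zero, Real.zero_rpow (by linarith : -(2*σ) ≠ 0)]
                norm_num
              · exact Real.rpow_le_one_of_one_le_of_nonpos
                  (by exact_mod_cast h) (by linarith)
          _ = (m+1 : ℝ) := by simp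
      have : (0:ℝ) ≤ σ - 1/2 := by linarith
      exact mul_le_mul_of_nonneg_left hPle this
    · have h0 : Continuous (fun σ : ℝ => (σ - 1/2) * (m+1:ℝ)) := by fun_prop
      have h1 := h0.tendsto (1/2 : ℝ)
      norm_num at h1
      exact h1.mono_left nhdsWithin_le_nhds
  -- Limit 3 : 2^(-(2σ)) → 1/2
  have T3 : Tendsto (fun σ : ℝ => (2:ℝ) ^ (-(2*σ))) (𝓝[>] (1/2 : ℝ)) (𝓝 (1/2)) := by
    have hc2 : ContinuousAt (fun t : ℝ => (2:ℝ) ^ t) (-(2*(1/2:ℝ))) :=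
      Real.continuousAt_const_rpow two_ne_zero
    have h := hc2.tendsto.comp
      (((continuous_const.mul continuous_id).neg).tendsto (1/2 : ℝ))
    have h2 : Tendsto (fun σ : ℝ => (2:ℝ) ^ (-(2*σ))) (𝓝 (1/2:ℝ)) (𝓝 ((2:ℝ) ^ (-(2*(1/2:ℝ))))) := by
      refine h.congr fun σ => rfl
    have hval : (2:ℝ) ^ (-(2*(1/2:ℝ))) = 1/2 := by
      rw [show -(2*(1/2:ℝ)) = -1 by norm_num, Real.rpow_neg_one]
      norm_num
    rw [hval] at h2
    exact h2.mono_left nhdsWithin_le_nhds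
  -- Limit 4 : (σ-1/2) * H σ → 0
  have T4 : Tendsto (fun σ : ℝ => (σ - 1/2) * H σ) (𝓝[>] (1/2 : ℝ)) (𝓝 0) := by
    set C : ℝ := ∑' a : ℕ, c^2 * ((((a:ℝ)+1) ^ 2) ^ (-(1:ℝ))) with hC
    have hCsum : Summable (fun a : ℕ => c^2 * ((((a:ℝ)+1) ^ 2) ^ (-(1:ℝ)))) :=
      (hcomp 1 (by norm_num)).mul_left _
    have hHbound : ∀ σ : ℝ, 1/2 < σ → σ ≤ 1 → H σ ≤ C := by
      intro σ hσ hσ1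
      rw [hH, hC]
      apply Summable.tsum_le_tsum _ ((hf_sum σ hσ).sub (hg_sum σ hσ)) hCsum
      intro a
      set B : ℝ := 4 * (x a) ^ 2 with hB
      have hBpos : 0 < B := by rw [hB]; positivity
      have hAB : A a ≤ B := hA_le a
      have hq1 : A a / B ≤ 1 := (div_le_one hBpos).2 hAB
      have hqpos : 0 < A a / B := div_pos (hA_pos a) hBpos
      have key : B ^ (-σ) = (A a) ^ (-σ) * (A a / B) ^ σ := by
        have h1 : (A a) ^ σ ≠ 0 := (Real.rpow_pos_of_pos (hA_pos a) σ).ne'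
        have h2 : B ^ σ ≠ 0 := (Real.rpow_pos_of_pos hBpos σ).ne'
        rw [Real.div_rpow (hA_pos a).le hBpos.le,
          Real.rpow_neg (hA_pos a).le, Real.rpow_neg hBpos.le]
        field_simp
      have hq : A a / B ≤ (A a / B) ^ σ := by
        nth_rewrite 1 [show A a / B = (A a / B) ^ (1:ℝ) from (Real.rpow_one _).symm]
        exact Real.rpow_le_rpow_of_exponent_ge hqpos hq1 hσ1
      have hAσ : (A a) ^ (-σ) ≤ 1 :=
        Real.rpow_le_one_of_one_le_of_nonpos (hA1 a) (by linarith)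
      have step1 : (A a) ^ (-σ) - B ^ (-σ) = (A a) ^ (-σ) * (1 - (A a / B) ^ σ) := by
        rw [key]; ring
      have step2 : (A a) ^ (-σ) * (1 - (A a / B) ^ σ) ≤ 1 * (1 - A a / B) := by
        apply mul_le_mul hAσ (by linarith) _ zero_le_one
        have : (A a / B) ^ σ ≤ 1 :=
          Real.rpow_le_one hqpos.le hq1 (by linarith)
        linarith
      have step3 : 1 - A a / B = c^2 / B := by
        field_simp [hB]; ring
      have step4 : c^2 / B ≤ c^2 * ((((a:ℝ)+1) ^ 2) ^ (-(1:ℝ))) := by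
        rw [Real.rpow_neg_one, div_eq_mul_inv]
        apply mul_le_mul_of_nonneg_left _ (sq_nonneg c)
        rw [hB]
        exact inv_anti₀ (by positivity) (hB_lb a)
      calc (A a) ^ (-σ) - B ^ (-σ) = (A a) ^ (-σ) * (1 - (A a / B) ^ σ) := step1
        _ ≤ 1 * (1 - A a / B) := step2
        _ = c^2 / B := by rw [one_mul, step3]
        _ ≤ c^2 * ((((a:ℝ)+1) ^ 2) ^ (-(1:ℝ))) := step4
    have hHnn : ∀ σ : ℝ, 1/2 < σ → 0 ≤ H σ := by
      intro σ hσ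
      rw [hH]
      apply tsum_nonneg
      intro a
      have : (4 * (x a) ^ 2) ^ (-σ) ≤ (A a) ^ (-σ) :=
        Real.rpow_le_rpow_of_nonpos (hA_pos a) (hA_le a) (by linarith)
      linarith
    apply squeeze_zero' (g := fun σ : ℝ => (σ - 1/2) * C)
    · filter_upwards [self_mem_nhdsWithin] with σ hσ
      simp only [mem_Ioi] at hσ
      exact mul_nonneg (by linarith) (hHnn σ hσ)
    · have hev : ∀ᶠ σ in 𝓝[>] (1/2 : ℝ), σ ≤ 1 := by
        filter_upwards [Icc_mem_nhdsGT_of_mem (by norm_num : (1/2 : ℝ) ∈ Ico (1/2:ℝ) 1)]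
          with σ hσ using hσ.2
      filter_upwards [self_mem_nhdsWithin, hev] with σ hσ hσ1
      simp only [mem_Ioi] at hσ
      exact mul_le_mul_of_nonneg_left (hHbound σ hσ hσ1) (by linarith)
    · have h0 : Continuous (fun σ : ℝ => (σ - 1/2) * C) := by fun_prop
      have h1 := h0.tendsto (1/2 : ℝ)
      norm_num at h1
      exact h1.mono_left nhdsWithin_le_nhds
  -- assemble
  have Tmain : Tendsto
      (fun σ : ℝ => (2:ℝ) ^ (-(2*σ)) * ((σ - 1/2) * Z (2*σ) - (σ - 1/2) * P σ)
        + (σ - 1/2) * H σ)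
      (𝓝[>] (1/2 : ℝ)) (𝓝 (1/4)) := by
    have h := (T3.mul (T1.sub T2)).add T4
    have hval : (1/2:ℝ) * (1/2 - 0) + 0 = 1/4 := by norm_num
    rwa [hval] at h
  refine Tendsto.congr' ?_ Tmain
  filter_upwards [self_mem_nhdsWithin] with σ hσ
  simp only [mem_Ioi] at hσ
  rw [hsplit σ hσ]
  ring
end

section
/- Let a, b : ℕ → ℂ and let σ_a, σ_b be real numbers such that ∑_{m=1}^∞ |a_m|·m^{−x} converges for every real x > σ_a and ∑_{n=1}^∞ |b_n|·n^{−x} converges for every real x > σ_b. Set f(s) = ∑_{m=1}^∞ a_m·m^{−s} and g(s) = ∑_{n=1}^∞ b_n·n^{−s}. Let σ be a real number with σ > σ_a + 1 and let w be a complex number with Re(w) > σ + σ_b. Then ∑_{l=1}^∞ |a_l·b_l|·l^{−Re(w)} converges, and lim_{T→∞} (1/(2T)) ∫_{−T}^{T} f(σ+it)·g(w−σ−it) dt exists and equals ∑_{l=1}^∞ a_l·b_l·l^{−w}. -/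
open Filter

private lemma exp_I_sub_exp_neg_I (x : ℝ) :
    Complex.exp ((x:ℂ) * Complex.I) - Complex.exp (-(x:ℂ) * Complex.I)
      = 2 * Complex.I * Real.sin x := by
  rw [Complex.ofReal_sin, Complex.sin]
  field_simp
  ring_nf
  rw [Complex.I_sq]
  ring

set_option maxHeartbeats 2000000 in
theorem dirichlet_product_formula (a b : ℕ → ℂ) (σa σb : ℝ)
    (ha : ∀ x : ℝ, σa < x → Summable (fun m : ℕ => ‖a (m + 1)‖ / ((m + 1 : ℕ) : ℝ) ^ x))
    (hb : ∀ x : ℝ, σb < x → Summable (fun n : ℕ => ‖b (n + 1)‖ / ((n + 1 : ℕ) : ℝ) ^ x))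
    (σ : ℝ) (hσ : σa + 1 < σ) (w : ℂ) (hw : σ + σb < w.re) :
    Summable (fun l : ℕ => ‖a (l + 1) * b (l + 1)‖ / ((l + 1 : ℕ) : ℝ) ^ w.re) ∧
    Tendsto (fun T : ℝ => 1 / (2 * (T : ℂ)) * ∫ t in (-T)..T,
        (∑' m : ℕ, a (m + 1) / ((m + 1 : ℕ) : ℂ) ^ ((σ : ℂ) + (t : ℂ) * Complex.I)) *
        (∑' n : ℕ, b (n + 1) / ((n + 1 : ℕ) : ℂ) ^ (w - (σ : ℂ) - (t : ℂ) * Complex.I)))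
      atTop (nhds (∑' l : ℕ, a (l + 1) * b (l + 1) / ((l + 1 : ℕ) : ℂ) ^ w)) := by
  have hpos : ∀ m : ℕ, (0:ℝ) < ((m + 1 : ℕ) : ℝ) := fun m => by positivity
  set L : ℕ → ℝ := fun m => Real.log ((m + 1 : ℕ) : ℝ) with hLdef
  have hLinj : Function.Injective L := by
    intro m n h
    have h2 : ((m+1:ℕ):ℝ) = ((n+1:ℕ):ℝ) := by
      rw [← Real.exp_log (hpos m), ← Real.exp_log (hpos n)]
      exact congrArg Real.exp h
    have : m + 1 = n + 1 := by exact_mod_cast h2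
    omega
  have hrpow : ∀ (m : ℕ) (x : ℝ), ((m + 1 : ℕ) : ℝ) ^ x = Real.exp (x * L m) := by
    intro m x
    rw [Real.rpow_def_of_pos (hpos m), hLdef, mul_comm]
  have hcpow : ∀ (m : ℕ) (s : ℂ), ((m + 1 : ℕ) : ℂ) ^ s = Complex.exp (s * (L m : ℂ)) := by
    intro m s
    rw [Complex.cpow_def_of_ne_zero (by exact_mod_cast (Nat.succ_ne_zero m)), mul_comm]
    congr 1
    rw [show ((m + 1 : ℕ) : ℂ) = (((m+1:ℕ):ℝ) : ℂ) by push_cast; ring,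
      ← Complex.ofReal_log (hpos m).le]
  -- summability in exp form
  have hA : Summable (fun m : ℕ => ‖a (m + 1)‖ * Real.exp (-(σ * L m))) := by
    refine (ha σ (by linarith)).congr fun m => ?_
    rw [hrpow, div_eq_mul_inv, ← Real.exp_neg]
  have hB : Summable (fun n : ℕ => ‖b (n + 1)‖ * Real.exp (-((w.re - σ) * L n))) := by
    refine (hb (w.re - σ) (by linarith)).congr fun n => ?_
    rw [hrpow, div_eq_mul_inv, ← Real.exp_neg]
  set bnd : ℕ × ℕ → ℝ := fun p => (‖a (p.1 + 1)‖ * Real.exp (-(σ * L p.1))) *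
      (‖b (p.2 + 1)‖ * Real.exp (-((w.re - σ) * L p.2))) with hbnddef
  have hbnd : Summable bnd :=
    hA.mul_of_nonneg hB (fun m => by positivity) (fun n => by positivity)
  set K : ℕ × ℕ → ℂ := fun p => a (p.1 + 1) * b (p.2 + 1) *
      Complex.exp (-((σ:ℂ) * (L p.1 : ℝ)) - (w - (σ:ℂ)) * (L p.2 : ℝ)) with hKdef
  have hKnorm : ∀ p, ‖K p‖ = bnd p := by
    intro p
    rw [hKdef]
    rw [norm_mul, norm_mul, Complex.norm_exp]
    have hre : (-((σ:ℂ) * (L p.1 : ℝ)) - (w - (σ:ℂ)) * (L p.2 : ℝ)).re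
        = -(σ * L p.1) + -((w.re - σ) * L p.2) := by
      simp [Complex.sub_re, Complex.mul_re]
      ring
    rw [hre, Real.exp_add, hbnddef]
    ring
  set θ : ℕ × ℕ → ℝ := fun p => L p.2 - L p.1 with hθdef
  have hθzero : ∀ p : ℕ × ℕ, p.1 = p.2 → θ p = 0 := by
    intro p hp; simp [hθdef, hp]
  have hθne : ∀ p : ℕ × ℕ, p.1 ≠ p.2 → θ p ≠ 0 := by
    intro p hp h0
    have h1 : L p.2 - L p.1 = 0 := h0
    have h2 : L p.1 = L p.2 := by linarith
    exact hp (hLinj h2)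
  -- first conjunct
  have hdiag : Summable (fun l : ℕ => ‖a (l + 1) * b (l + 1)‖ / ((l + 1 : ℕ) : ℝ) ^ w.re) := by
    have hinj : Function.Injective (fun l : ℕ => ((l, l) : ℕ × ℕ)) :=
      fun x y h => (Prod.ext_iff.mp h).1
    refine (hbnd.comp_injective hinj).congr fun l => ?_
    simp only [Function.comp_apply, hbnddef]
    rw [hrpow, norm_mul, div_eq_mul_inv, ← Real.exp_neg]
    have hexp : Real.exp (-(σ * L l)) * Real.exp (-((w.re - σ) * L l))
        = Real.exp (-(w.re * L l)) := by
      rw [← Real.exp_add]; congr 1; ring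
    calc ‖a (l+1)‖ * Real.exp (-(σ * L l)) * (‖b (l+1)‖ * Real.exp (-((w.re - σ) * L l)))
        = ‖a (l+1)‖ * ‖b (l+1)‖ *
            (Real.exp (-(σ * L l)) * Real.exp (-((w.re - σ) * L l))) := by ring
      _ = ‖a (l+1)‖ * ‖b (l+1)‖ * Real.exp (-(w.re * L l)) := by rw [hexp]
  refine ⟨hdiag, ?_⟩
  -- E function
  set E : ℝ → ℕ × ℕ → ℂ := fun T p => if p.1 = p.2 then 1
      else ((Real.sin (T * θ p) / (T * θ p) : ℝ) : ℂ) with hEdef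
  -- key identity for T > 0
  have key : ∀ T : ℝ, 0 < T →
      (1 / (2 * (T:ℂ)) * ∫ t in (-T)..T,
        (∑' m : ℕ, a (m + 1) / ((m + 1 : ℕ) : ℂ) ^ ((σ : ℂ) + (t : ℂ) * Complex.I)) *
        (∑' n : ℕ, b (n + 1) / ((n + 1 : ℕ) : ℂ) ^ (w - (σ : ℂ) - (t : ℂ) * Complex.I)))
      = ∑' p : ℕ × ℕ, K p * E T p := by
    intro T hT
    have hT0 : (T:ℂ) ≠ 0 := by exact_mod_cast hT.ne'
    have hfg : ∀ t : ℝ,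
        (∑' m : ℕ, a (m + 1) / ((m + 1 : ℕ) : ℂ) ^ ((σ : ℂ) + (t : ℂ) * Complex.I)) *
        (∑' n : ℕ, b (n + 1) / ((n + 1 : ℕ) : ℂ) ^ (w - (σ : ℂ) - (t : ℂ) * Complex.I))
        = ∑' p : ℕ × ℕ, K p * Complex.exp ((t : ℂ) * (θ p : ℝ) * Complex.I) := by
      intro t
      have h1 : ∀ m : ℕ, a (m + 1) / ((m + 1 : ℕ) : ℂ) ^ ((σ : ℂ) + (t : ℂ) * Complex.I)
          = a (m + 1) * Complex.exp (-(((σ:ℂ) + (t:ℂ) * Complex.I) * (L m : ℝ))) := by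
        intro m; rw [hcpow, div_eq_mul_inv, ← Complex.exp_neg]
      have h2 : ∀ n : ℕ, b (n + 1) / ((n + 1 : ℕ) : ℂ) ^ (w - (σ:ℂ) - (t:ℂ) * Complex.I)
          = b (n + 1) * Complex.exp (-((w - (σ:ℂ) - (t:ℂ) * Complex.I) * (L n : ℝ))) := by
        intro n; rw [hcpow, div_eq_mul_inv, ← Complex.exp_neg]
      have hfs : Summable (fun m : ℕ =>
          ‖a (m + 1) * Complex.exp (-(((σ:ℂ) + (t:ℂ) * Complex.I) * (L m : ℝ)))‖) := by
        refine hA.congr fun m => ?_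
        rw [norm_mul, Complex.norm_exp]
        congr 2
        simp [Complex.add_re, Complex.mul_re]
      have hgs : Summable (fun n : ℕ =>
          ‖b (n + 1) * Complex.exp (-((w - (σ:ℂ) - (t:ℂ) * Complex.I) * (L n : ℝ)))‖) := by
        refine hB.congr fun n => ?_
        rw [norm_mul, Complex.norm_exp]
        congr 2
        simp [Complex.sub_re, Complex.mul_re]
        try ring
      rw [tsum_congr h1, tsum_congr h2, tsum_mul_tsum_of_summable_norm hfs hgs]
      refine tsum_congr fun p => ?_
      have hz : (-(((σ:ℂ) + (t:ℂ) * Complex.I) * (L p.1 : ℝ)))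
          + (-((w - (σ:ℂ) - (t:ℂ) * Complex.I) * (L p.2 : ℝ)))
          = (-((σ:ℂ) * (L p.1 : ℝ)) - (w - (σ:ℂ)) * (L p.2 : ℝ))
            + (t:ℂ) * ((θ p : ℝ) : ℂ) * Complex.I := by
        rw [hθdef]; push_cast; ring
      rw [mul_mul_mul_comm, ← Complex.exp_add, hz, Complex.exp_add, hKdef, ← mul_assoc]
    simp only [hfg]
    have hTT : (-T) ≤ T := by linarith
    have hnorm1 : ∀ (p : ℕ × ℕ) (t : ℝ),
        ‖K p * Complex.exp ((t:ℂ) * (θ p : ℝ) * Complex.I)‖ = ‖K p‖ := by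
      intro p t
      rw [norm_mul, Complex.norm_exp]
      simp [Complex.mul_re, Complex.mul_im]
    have hswap : (∫ t in (-T)..T, ∑' p : ℕ × ℕ, K p * Complex.exp ((t:ℂ) * (θ p : ℝ) * Complex.I))
        = ∑' p : ℕ × ℕ, ∫ t in (-T)..T, K p * Complex.exp ((t:ℂ) * (θ p : ℝ) * Complex.I) := by
      rw [intervalIntegral.integral_of_le hTT]
      rw [← MeasureTheory.integral_tsum_of_summable_integral_norm ?_ ?_]
      · exact tsum_congr fun p => (intervalIntegral.integral_of_le hTT).symm
      · intro p
        apply Continuous.integrableOn_Ioc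
        exact continuous_const.mul (Complex.continuous_exp.comp
          ((Complex.continuous_ofReal.mul continuous_const).mul continuous_const))
      · refine ((hbnd.mul_left (2 * T)).congr fun p => ?_)
        simp only [hnorm1]
        rw [MeasureTheory.integral_const]
        simp only [MeasureTheory.Measure.restrict_apply, MeasurableSet.univ,
          Set.univ_inter, Real.volume_Ioc, smul_eq_mul]
        rw [MeasureTheory.measureReal_restrict_apply_univ, Real.volume_real_Ioc_of_le hTT, hKnorm]
        ring
    rw [hswap, ← tsum_mul_left]
    refine tsum_congr fun p => ?_
    rw [intervalIntegral.integral_const_mul]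
    by_cases hp : p.1 = p.2
    · rw [hθzero p hp]
      simp only [Complex.ofReal_zero, mul_zero, zero_mul, Complex.exp_zero]
      rw [intervalIntegral.integral_const]
      have h2T : ((T : ℝ) - -T) • (1:ℂ) = 2 * (T:ℂ) := by
        rw [Complex.real_smul]
        push_cast
        ring
      rw [h2T]
      simp only [hEdef, hp, eq_self_iff_true, if_true, mul_one]
      field_simp
    · have hθ0 : ((θ p : ℝ) : ℂ) ≠ 0 := by exact_mod_cast hθne p hp
      have hrw2 : ∀ t : ℝ, (t:ℂ) * ((θ p : ℝ) : ℂ) * Complex.I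
          = (((θ p : ℝ) : ℂ) * Complex.I) * (t : ℂ) := fun t => by ring
      simp only [hrw2]
      rw [integral_exp_mul_complex
        (mul_ne_zero hθ0 Complex.I_ne_zero)]
      have e1 : ((θ p : ℝ) : ℂ) * Complex.I * (T:ℂ) = ((T * θ p : ℝ) : ℂ) * Complex.I := by
        push_cast; ring
      have e2 : ((θ p : ℝ) : ℂ) * Complex.I * ((-T : ℝ):ℂ) = -((T * θ p : ℝ) : ℂ) * Complex.I := by
        push_cast; ring
      rw [e1, e2, exp_I_sub_exp_neg_I (T * θ p)]
      rw [hEdef]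
      simp only [hp, if_false]
      rw [Complex.ofReal_div]
      have hTθ : ((T * θ p : ℝ) : ℂ) ≠ 0 := by
        push_cast
        exact mul_ne_zero hT0 hθ0
      push_cast
      field_simp
  -- limit of the tsum
  have hlim : Tendsto (fun T : ℝ => ∑' p : ℕ × ℕ, K p * E T p) atTop
      (nhds (∑' p : ℕ × ℕ, (if p.1 = p.2 then K p else 0))) := by
    refine tendsto_tsum_of_dominated_convergence hbnd ?_ ?_
    · intro p
      by_cases hp : p.1 = p.2
      · have : ∀ T : ℝ, K p * E T p = K p := by
          intro T; rw [hEdef]; simp [hp]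
        simp only [this, hp, if_true]
        exact tendsto_const_nhds
      · simp only [hp, if_false]
        have hθ0 : θ p ≠ 0 := hθne p hp
        have hEval : ∀ T : ℝ, K p * E T p
            = K p * ((Real.sin (T * θ p) / (T * θ p) : ℝ) : ℂ) := by
          intro T; rw [hEdef]; simp [hp]
        simp only [hEval]
        have hg0 : Tendsto (fun T : ℝ => ‖K p‖ * (|θ p|⁻¹ * |T|⁻¹)) atTop (nhds 0) := by
          have h1 : Tendsto (fun T : ℝ => |T|⁻¹) atTop (nhds 0) :=
            (tendsto_abs_atTop_atTop).inv_tendsto_atTop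
          have h2 := h1.const_mul (‖K p‖ * |θ p|⁻¹)
          simp only [mul_zero] at h2
          refine h2.congr fun T => by ring
        refine squeeze_zero_norm (fun T => ?_) hg0
        · 
          rw [norm_mul, Complex.norm_real, Real.norm_eq_abs]
          refine mul_le_mul_of_nonneg_left ?_ (norm_nonneg _)
          by_cases hTz : T = 0
          · simp [hTz]
          · have hTθ : T * θ p ≠ 0 := mul_ne_zero hTz hθ0
            rw [abs_div]
            rw [div_le_iff₀ (abs_pos.mpr hTθ)]
            have : |θ p|⁻¹ * |T|⁻¹ * |T * θ p| = 1 := by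
              rw [abs_mul]
              field_simp
            calc |Real.sin (T * θ p)| ≤ 1 :=
                  abs_le.mpr ⟨Real.neg_one_le_sin _, Real.sin_le_one _⟩
              _ = |θ p|⁻¹ * |T|⁻¹ * |T * θ p| := this.symm
    · filter_upwards [eventually_gt_atTop (0:ℝ)] with T hT p
      rw [norm_mul, ← hKnorm p]
      have hE1 : ‖E T p‖ ≤ 1 := by
        by_cases hp : p.1 = p.2
        · rw [hEdef]; simp [hp]
        · rw [hEdef]
          simp only [hp, if_false, Complex.norm_real, Real.norm_eq_abs]
          by_cases hTθ : T * θ p = 0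
          · simp [hTθ]
          · rw [abs_div, div_le_one (abs_pos.mpr hTθ)]
            exact (Real.abs_sin_lt_abs hTθ).le
      calc ‖K p‖ * ‖E T p‖ ≤ ‖K p‖ * 1 :=
            mul_le_mul_of_nonneg_left hE1 (norm_nonneg _)
        _ = ‖K p‖ := mul_one _
  -- identify the limit
  have hsum_eq : (∑' p : ℕ × ℕ, (if p.1 = p.2 then K p else 0))
      = ∑' l : ℕ, a (l + 1) * b (l + 1) / ((l + 1 : ℕ) : ℂ) ^ w := by
    have hginj : Function.Injective (fun l : ℕ => ((l, l) : ℕ × ℕ)) := by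
      intro x y h; simpa using (Prod.mk.injEq _ _ _ _ ▸ h).1
    have hsupp : Function.support (fun p : ℕ × ℕ => if p.1 = p.2 then K p else 0)
        ⊆ Set.range (fun l : ℕ => ((l, l) : ℕ × ℕ)) := by
      intro p hp
      simp only [Function.mem_support] at hp
      by_cases h : p.1 = p.2
      · exact ⟨p.1, by rw [Prod.ext_iff]; exact ⟨rfl, h⟩⟩
      · simp [h] at hp
    rw [← Function.Injective.tsum_eq hginj hsupp]
    refine tsum_congr fun l => ?_
    rw [if_pos rfl]
    simp only [hKdef]
    rw [show -((σ:ℂ) * ((L l : ℝ):ℂ)) - (w - (σ:ℂ)) * ((L l : ℝ):ℂ)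
        = -(w * ((L l : ℝ):ℂ)) from by ring, hcpow, div_eq_mul_inv, ← Complex.exp_neg]
  rw [← hsum_eq]
  refine Tendsto.congr' ?_ hlim
  filter_upwards [eventually_gt_atTop (0:ℝ)] with T hT
  exact (key T hT).symm
end

section
/- Let n ≥ 2 be a natural number. If n has exactly one distinct prime factor p (i.e. n = p^k for some k ≥ 1), then ∑_{d ∣ n} μ(d)·(log d)² = −(log p)². If n has exactly two distinct prime factors p and q, then ∑_{d ∣ n} μ(d)·(log d)² = 2·(log p)·(log q). If n has at least three distinct prime factors, then ∑_{d ∣ n} μ(d)·(log d)² = 0. -/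
open Finset

private lemma T0_eq {P : Finset ℕ} (hP : P.Nonempty) :
    ∑ t ∈ P.powerset, (-1 : ℝ) ^ t.card = 0 := by
  exact_mod_cast congrArg (Int.cast : ℤ → ℝ)
    (Finset.sum_powerset_neg_one_pow_card_of_nonempty hP)

private lemma S1_insert (x : ℕ → ℝ) {P : Finset ℕ} {a : ℕ} (ha : a ∉ P) :
    ∑ t ∈ (insert a P).powerset, (-1 : ℝ) ^ t.card * ∑ p ∈ t, x p =
      -x a * ∑ t ∈ P.powerset, (-1 : ℝ) ^ t.card := by
  rw [Finset.sum_powerset_insert ha]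
  have h : ∀ t ∈ P.powerset,
      (-1 : ℝ) ^ (insert a t).card * ∑ p ∈ insert a t, x p =
        -((-1 : ℝ) ^ t.card * x a) - (-1 : ℝ) ^ t.card * ∑ p ∈ t, x p := by
    intro t ht
    rw [Finset.mem_powerset] at ht
    have hat : a ∉ t := fun h => ha (ht h)
    rw [Finset.card_insert_of_notMem hat, Finset.sum_insert hat, pow_succ]
    ring
  rw [Finset.sum_congr rfl h, Finset.sum_sub_distrib]
  simp only [Finset.sum_neg_distrib, ← Finset.sum_mul]
  ring

private lemma S2_insert (x : ℕ → ℝ) {P : Finset ℕ} {a : ℕ} (ha : a ∉ P) :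
    ∑ t ∈ (insert a P).powerset, (-1 : ℝ) ^ t.card * (∑ p ∈ t, x p) ^ 2 =
      -(x a) ^ 2 * (∑ t ∈ P.powerset, (-1 : ℝ) ^ t.card)
        - 2 * x a * ∑ t ∈ P.powerset, (-1 : ℝ) ^ t.card * ∑ p ∈ t, x p := by
  rw [Finset.sum_powerset_insert ha]
  have h : ∀ t ∈ P.powerset,
      (-1 : ℝ) ^ (insert a t).card * (∑ p ∈ insert a t, x p) ^ 2 =
        -((-1 : ℝ) ^ t.card * (x a) ^ 2)
          - (2 * x a) * ((-1 : ℝ) ^ t.card * ∑ p ∈ t, x p)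
          - (-1 : ℝ) ^ t.card * (∑ p ∈ t, x p) ^ 2 := by
    intro t ht
    rw [Finset.mem_powerset] at ht
    have hat : a ∉ t := fun h => ha (ht h)
    rw [Finset.card_insert_of_notMem hat, Finset.sum_insert hat, pow_succ]
    ring
  rw [Finset.sum_congr rfl h]
  simp only [Finset.sum_sub_distrib, Finset.sum_neg_distrib, ← Finset.sum_mul,
    ← Finset.mul_sum]
  ring

private lemma decomp {P : Finset ℕ} (h : 1 ≤ P.card) :
    ∃ a Q, a ∉ Q ∧ P = insert a Q ∧ Q.card + 1 = P.card := by
  obtain ⟨a, ha⟩ := Finset.card_pos.mp h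
  refine ⟨a, P.erase a, Finset.notMem_erase a _, (Finset.insert_erase ha).symm, ?_⟩
  rw [Finset.card_erase_of_mem ha]
  omega

private lemma S1_eq_zero (x : ℕ → ℝ) {P : Finset ℕ} (h : 2 ≤ P.card) :
    ∑ t ∈ P.powerset, (-1 : ℝ) ^ t.card * ∑ p ∈ t, x p = 0 := by
  obtain ⟨a, Q, haQ, rfl, hc⟩ := decomp (by omega : 1 ≤ P.card)
  rw [S1_insert x haQ, T0_eq (Finset.card_pos.mp (by omega)), mul_zero]

private lemma S2_eq_zero (x : ℕ → ℝ) {P : Finset ℕ} (h : 3 ≤ P.card) :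
    ∑ t ∈ P.powerset, (-1 : ℝ) ^ t.card * (∑ p ∈ t, x p) ^ 2 = 0 := by
  obtain ⟨a, Q, haQ, rfl, hc⟩ := decomp (by omega : 1 ≤ P.card)
  rw [S2_insert x haQ, T0_eq (Finset.card_pos.mp (by omega)),
    S1_eq_zero x (by omega : 2 ≤ Q.card)]
  ring

/-- The main reduction: the sum over divisors equals the powerset sum. -/
private lemma sum_div_eq (n : ℕ) (hn : n ≠ 0) :
    ∑ d ∈ n.divisors, (ArithmeticFunction.moebius d : ℝ) * (Real.log d) ^ 2 =
      ∑ t ∈ n.primeFactors.powerset, (-1 : ℝ) ^ t.card * (∑ p ∈ t, Real.log p) ^ 2 := by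
  classical
  rw [← Finset.sum_filter_add_sum_filter_not n.divisors Squarefree
    (fun d => (ArithmeticFunction.moebius d : ℝ) * (Real.log d) ^ 2)]
  have h2 : ∑ d ∈ n.divisors with ¬ Squarefree d,
      (ArithmeticFunction.moebius d : ℝ) * (Real.log d) ^ 2 = 0 := by
    apply Finset.sum_eq_zero
    intro d hd
    rw [Finset.mem_filter] at hd
    rw [ArithmeticFunction.moebius_eq_zero_of_not_squarefree hd.2]
    simp
  rw [h2, add_zero, Nat.sum_divisors_filter_squarefree hn]
  have hfac : (UniqueFactorizationMonoid.normalizedFactors n).toFinset = n.primeFactors := by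
    rw [Nat.factors_eq]
    rfl
  rw [hfac]
  apply Finset.sum_congr rfl
  intro t ht
  rw [Finset.mem_powerset] at ht
  have hnd : ∀ p ∈ t, Nat.Prime p := fun p hp => Nat.prime_of_mem_primeFactors (ht hp)
  have hprod : t.val.prod = ∏ p ∈ t, p := by rw [Finset.prod_val]; rfl
  have hmu : (ArithmeticFunction.moebius (∏ p ∈ t, p) : ℝ) = (-1 : ℝ) ^ t.card := by
    have := ArithmeticFunction.IsMultiplicative.map_prod_of_prime
      ArithmeticFunction.isMultiplicative_moebius t hnd
    rw [this, Finset.prod_congr rfl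
      (fun p hp => ArithmeticFunction.moebius_apply_prime (hnd p hp)),
      Finset.prod_const]
    push_cast
    ring
  have hlog : Real.log ((∏ p ∈ t, p : ℕ) : ℝ) = ∑ p ∈ t, Real.log p := by
    push_cast
    rw [Real.log_prod]
    intro p hp
    exact_mod_cast (hnd p hp).pos.ne'
  rw [hprod, hmu, hlog]

theorem mulog2_cases (n : ℕ) (hn : 2 ≤ n) :
    (∀ p : ℕ, n.primeFactors = {p} →
      ∑ d ∈ n.divisors, (ArithmeticFunction.moebius d : ℝ) * (Real.log d) ^ 2 =
        -(Real.log p) ^ 2) ∧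
    (∀ p q : ℕ, p ≠ q → n.primeFactors = {p, q} →
      ∑ d ∈ n.divisors, (ArithmeticFunction.moebius d : ℝ) * (Real.log d) ^ 2 =
        2 * Real.log p * Real.log q) ∧
    (3 ≤ n.primeFactors.card →
      ∑ d ∈ n.divisors, (ArithmeticFunction.moebius d : ℝ) * (Real.log d) ^ 2 = 0) := by
  have hn0 : n ≠ 0 := by omega
  rw [sum_div_eq n hn0]
  set x : ℕ → ℝ := fun p => Real.log p with hx
  refine ⟨?_, ?_, ?_⟩
  · intro p hp
    rw [hp]
    have h1 : ({p} : Finset ℕ) = insert p ∅ := rfl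
    rw [h1, S2_insert x (Finset.notMem_empty p)]
    simp [x]
  · intro p q hpq hP
    rw [hP]
    have hpq' : p ∉ ({q} : Finset ℕ) := by simp [hpq]
    have h1 : ({p, q} : Finset ℕ) = insert p {q} := rfl
    have h2 : ({q} : Finset ℕ) = insert q ∅ := rfl
    rw [h1, S2_insert x hpq', T0_eq (Finset.singleton_nonempty q), h2,
      S1_insert x (Finset.notMem_empty q)]
    simp [x]
  · intro hcard
    exact S2_eq_zero x hcard
end

section
/- Let D be a positive odd integer and let w be a complex number with Re(w) > 1/2. Then ∑_{n>⌊D/2⌋} (2n)^{−2w} ∑_{d ∣ 4n²} μ(d)·(log d)² = −2·log 2·[ (2^{2w}−1)^{−1}·( ζ'(2w)/ζ(2w) + log 2/(2^{2w}−1) ) + ∑_{(j,k,p)} (log p)·2^{−2(j+1)w}·p^{−2kw} ] − (log 2)²·[ (2^{2w}−1)^{−1} − ∑_{j≥0, 2^j ≤ ⌊D/2⌋} 2^{−2(j+1)w} ], where the sum ∑_{(j,k,p)} ranges over all triples with p an odd prime, j ≥ 0, k ≥ 1 and 2^j·p^k ≤ ⌊D/2⌋. (Note ζ(2w) ≠ 0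 and 2^{2w} ≠ 1 since Re(2w) > 1.) -/
/-- `∑_{d ∣ n} μ(d) (log d)²`. -/
noncomputable def mulog2 (n : ℕ) : ℝ :=
  ∑ d ∈ n.divisors, (ArithmeticFunction.moebius d : ℝ) * (Real.log d) ^ 2

open Finset ArithmeticFunction Complex


lemma powerset_sign (P : Finset ℕ) :
    ∑ S ∈ P.powerset, (-1 : ℝ) ^ S.card = if P = ∅ then 1 else 0 := by
  have := Finset.sum_powerset_neg_one_pow_card (x := P)
  have h2 : ((∑ m ∈ P.powerset, (-1 : ℤ) ^ m.card : ℤ) : ℝ)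
      = ∑ m ∈ P.powerset, (-1 : ℝ) ^ m.card := by push_cast; rfl
  rw [← h2, this]
  split <;> simp

lemma powerset_sign_inner (P : Finset ℕ) (p : ℕ) (hp : p ∈ P) (c : ℝ) :
    ∑ S ∈ P.powerset, (if p ∈ S then (-1 : ℝ) ^ S.card * c else 0) =
      -(if P = {p} then c else 0) := by
  classical
  have key : ∑ S ∈ (insert p (P.erase p)).powerset,
      (if p ∈ S then (-1 : ℝ) ^ S.card * c else 0) =
      -(if P = {p} then c else 0) := by
    rw [Finset.sum_powerset_insert (Finset.notMem_erase p P)]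
    have h1 : ∀ T ∈ (P.erase p).powerset,
        (if p ∈ T then (-1 : ℝ) ^ T.card * c else 0) = 0 := by
      intro T hT
      rw [mem_powerset] at hT
      rw [if_neg (fun hpT => Finset.notMem_erase p P (hT hpT))]
    have h2 : ∀ T ∈ (P.erase p).powerset,
        (if p ∈ insert p T then (-1 : ℝ) ^ (insert p T).card * c else 0) =
          -((-1 : ℝ) ^ T.card) * c := by
      intro T hT
      rw [mem_powerset] at hT
      have hpT : p ∉ T := fun hpT => Finset.notMem_erase p P (hT hpT)
      rw [if_pos (Finset.mem_insert_self p T), Finset.card_insert_of_notMem hpT]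
      ring
    rw [Finset.sum_congr rfl h1, Finset.sum_congr rfl h2]
    simp only [Finset.sum_const_zero, zero_add, neg_mul, Finset.sum_neg_distrib,
      ← Finset.sum_mul, powerset_sign]
    have herase : P.erase p = ∅ ↔ P = {p} := by
      rw [Finset.erase_eq_empty_iff]
      constructor
      · rintro (h | h)
        · exact absurd hp (h ▸ Finset.notMem_empty p)
        · exact h
      · exact Or.inr
    by_cases h : P = {p}
    · rw [if_pos (herase.mpr h), if_pos h]; ring
    · rw [if_neg (fun he => h (herase.mp he)), if_neg h]; ring
  rw [← key, Finset.insert_erase hp]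

lemma powerset_sign_mul (P : Finset ℕ) (g : ℕ → ℝ) :
    ∑ S ∈ P.powerset, (-1 : ℝ) ^ S.card * ∑ p ∈ S, g p =
      -∑ p ∈ P, (if P = {p} then g p else 0) := by
  classical
  have h1 : ∀ S ∈ P.powerset, (-1 : ℝ) ^ S.card * ∑ p ∈ S, g p =
      ∑ p ∈ P, (if p ∈ S then (-1 : ℝ) ^ S.card * g p else 0) := by
    intro S hS
    rw [mem_powerset] at hS
    rw [Finset.sum_ite_mem, (Finset.inter_eq_right).mpr hS, Finset.mul_sum]
  rw [Finset.sum_congr rfl h1, Finset.sum_comm, ← Finset.sum_neg_distrib]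
  exact Finset.sum_congr rfl fun p hp => powerset_sign_inner P p hp (g p)

lemma mulog2_4sq (m : ℕ) (hm : m ≠ 0) :
    mulog2 (4 * m ^ 2) =
      2 * Real.log 2 * ArithmeticFunction.vonMangoldt (m / 2 ^ (m.factorization 2)) -
        (Real.log 2) ^ 2 * (if m / 2 ^ (m.factorization 2) = 1 then 1 else 0) := by
  classical
  set q : ℕ := m / 2 ^ (m.factorization 2) with hqdef
  have hq0 : q ≠ 0 := (Nat.ordCompl_pos 2 hm).ne'
  have hq2 : ¬ 2 ∣ q := Nat.not_dvd_ordCompl Nat.prime_two hm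
  have hn0 : 4 * m ^ 2 ≠ 0 := by positivity
  have h2P : 2 ∉ q.primeFactors := by
    simp only [Nat.mem_primeFactors]
    tauto
  have hqm : q ∣ m := Nat.ordCompl_dvd m 2
  have hPF : (4 * m ^ 2).primeFactors = insert 2 q.primeFactors := by
    ext r
    simp only [Nat.mem_primeFactors, Finset.mem_insert]
    constructor
    · rintro ⟨hr, hrd, -⟩
      by_cases hr2 : r = 2
      · exact Or.inl hr2
      · refine Or.inr ⟨hr, ?_, hq0⟩
        have h4 : (4 : ℕ) = 2 ^ 2 := by norm_num
        have hrm : r ∣ m := by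
          rcases (Nat.Prime.dvd_mul hr).mp hrd with h | h
          · exact absurd ((Nat.prime_dvd_prime_iff_eq hr Nat.prime_two).mp
              (hr.dvd_of_dvd_pow (h4 ▸ h))) hr2
          · exact hr.dvd_of_dvd_pow h
        have hm' : m = 2 ^ (m.factorization 2) * q := (Nat.ordProj_mul_ordCompl_eq_self m 2).symm
        rcases (Nat.Prime.dvd_mul hr).mp (hm' ▸ hrm) with h | h
        · exact absurd ((Nat.prime_dvd_prime_iff_eq hr Nat.prime_two).mp
            (hr.dvd_of_dvd_pow h)) hr2
        · exact h
    · rintro (rfl | ⟨hr, hrq, -⟩)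
      · exact ⟨Nat.prime_two, Dvd.dvd.mul_right (by norm_num) _, hn0⟩
      · exact ⟨hr, (hrq.trans (hqm.trans (dvd_pow_self m two_ne_zero))).mul_left 4, hn0⟩
  have hfilter : ∑ d ∈ (4 * m ^ 2).divisors with Squarefree d,
      ((moebius d : ℤ) : ℝ) * (Real.log d) ^ 2 =
      ∑ d ∈ (4 * m ^ 2).divisors, ((moebius d : ℤ) : ℝ) * (Real.log d) ^ 2 :=
    Finset.sum_filter_of_ne (fun d _ hne => by
      by_contra hsf
      rw [moebius_eq_zero_of_not_squarefree hsf] at hne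
      simp at hne)
  rw [mulog2, ← hfilter]
  rw [Nat.sum_divisors_filter_squarefree hn0]
  have hfacts : (UniqueFactorizationMonoid.normalizedFactors (4 * m ^ 2)).toFinset
      = (4 * m ^ 2).primeFactors := by
    rw [Nat.factors_eq]
    simp
  rw [hfacts, hPF, Finset.sum_powerset_insert h2P]
  -- values of terms
  have hprodval : ∀ S : Finset ℕ, (S.val.prod) = ∏ p ∈ S, p := fun S => by
    rw [Finset.prod_eq_multiset_prod, Multiset.map_id']
  have hμ : ∀ S ∈ q.primeFactors.powerset, ((moebius (∏ p ∈ S, p) : ℤ) : ℝ) = (-1) ^ S.card := by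
    intro S hS
    rw [mem_powerset] at hS
    rw [ArithmeticFunction.IsMultiplicative.map_prod_of_subset_primeFactors
      isMultiplicative_moebius q S hS]
    rw [Finset.prod_congr rfl (fun p hp =>
      moebius_apply_prime (Nat.prime_of_mem_primeFactors (hS hp)))]
    rw [Finset.prod_const]
    push_cast
    ring
  have hlog : ∀ S ∈ q.primeFactors.powerset,
      Real.log ((∏ p ∈ S, p : ℕ) : ℝ) = ∑ p ∈ S, Real.log p := by
    intro S hS
    rw [mem_powerset] at hS
    rw [Nat.cast_prod]
    exact Real.log_prod (fun p hp => Nat.cast_ne_zero.mpr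
      (Nat.prime_of_mem_primeFactors (hS hp)).ne_zero)
  have h2S : ∀ S ∈ q.primeFactors.powerset, 2 ∉ S := fun S hS h2 =>
    h2P ((mem_powerset.mp hS) h2)
  have hμ2 : ∀ S ∈ q.primeFactors.powerset,
      ((moebius (∏ p ∈ insert 2 S, p) : ℤ) : ℝ) = -((-1) ^ S.card) := by
    intro S hS
    have hsub : insert 2 S ⊆ (4 * m ^ 2).primeFactors := by
      rw [hPF]
      exact Finset.insert_subset_insert 2 (mem_powerset.mp hS)
    rw [ArithmeticFunction.IsMultiplicative.map_prod_of_subset_primeFactors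
      isMultiplicative_moebius _ _ hsub]
    rw [Finset.prod_insert (h2S S hS)]
    rw [Finset.prod_congr rfl (fun p hp =>
      moebius_apply_prime (Nat.prime_of_mem_primeFactors (mem_powerset.mp hS hp)))]
    rw [moebius_apply_prime Nat.prime_two, Finset.prod_const]
    push_cast
    ring
  have hlog2 : ∀ S ∈ q.primeFactors.powerset,
      Real.log ((∏ p ∈ insert 2 S, p : ℕ) : ℝ) = Real.log 2 + ∑ p ∈ S, Real.log p := by
    intro S hS
    rw [Finset.prod_insert (h2S S hS), Nat.cast_mul, Real.log_mul (by norm_num)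
      (by
        refine Nat.cast_ne_zero.mpr (Finset.prod_ne_zero_iff.mpr fun p hp => ?_)
        exact (Nat.prime_of_mem_primeFactors (mem_powerset.mp hS hp)).ne_zero),
      Nat.cast_ofNat, hlog S hS]
  -- combine
  have hcomb : (∑ S ∈ q.primeFactors.powerset,
        (moebius S.val.prod : ℝ) * (Real.log S.val.prod) ^ 2) +
      (∑ S ∈ q.primeFactors.powerset,
        (moebius (insert 2 S).val.prod : ℝ) * (Real.log (insert 2 S).val.prod) ^ 2) =
      ∑ S ∈ q.primeFactors.powerset,
        ((-(Real.log 2) ^ 2) * ((-1) ^ S.card) +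
          (-2 * Real.log 2) * ((-1 : ℝ) ^ S.card * ∑ p ∈ S, Real.log p)) := by
    rw [← Finset.sum_add_distrib]
    refine Finset.sum_congr rfl fun S hS => ?_
    rw [hprodval S, hprodval (insert 2 S), hμ S hS, hμ2 S hS, hlog S hS, hlog2 S hS]
    ring
  rw [hcomb, Finset.sum_add_distrib, ← Finset.mul_sum, ← Finset.mul_sum,
    powerset_sign, powerset_sign_mul]
  -- final evaluation
  have hempty : (if q.primeFactors = ∅ then (1:ℝ) else 0) = (if q = 1 then 1 else 0) := by
    have : q.primeFactors = ∅ ↔ q = 1 := by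
      rw [Nat.primeFactors_eq_empty]
      exact ⟨fun h => h.resolve_left hq0, Or.inr⟩
    simp only [this]
  have hvM : ∑ p ∈ q.primeFactors, (if q.primeFactors = {p} then Real.log p else 0) =
      ArithmeticFunction.vonMangoldt q := by
    by_cases hpp : IsPrimePow q
    · obtain ⟨p, k, hp, hk, hq⟩ := hpp
      rw [← Nat.prime_iff] at hp
      rw [← hq, Nat.primeFactors_prime_pow hk.ne' hp,
        ArithmeticFunction.vonMangoldt_apply_pow hk.ne',
        ArithmeticFunction.vonMangoldt_apply_prime hp]
      simp
    · rw [ArithmeticFunction.vonMangoldt_apply, if_neg hpp]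
      refine Finset.sum_eq_zero fun p hp => ?_
      rw [if_neg]
      intro h
      exact hpp (isPrimePow_iff_card_primeFactors_eq_one.mpr (by rw [h]; simp))
  rw [hempty, hvM]
  ring


section
variable {s : ℂ}

lemma nat_cpow_pow (a k : ℕ) (c : ℂ) : (((a ^ k : ℕ)) : ℂ) ^ c = ((a : ℂ) ^ c) ^ k := by
  push_cast
  rw [← Complex.natCast_cpow_natCast_mul a k c, Complex.cpow_nat_mul]

lemma nat_cpow_mul (a b : ℕ) (c : ℂ) :
    ((a * b : ℕ) : ℂ) ^ c = (a : ℂ) ^ c * (b : ℂ) ^ c := by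
  push_cast
  exact Complex.natCast_mul_natCast_cpow a b c

lemma abs_two_cpow (s : ℂ) : ‖(2 : ℂ) ^ s‖ = (2 : ℝ) ^ s.re := by
  rw [show (2 : ℂ) = ((2 : ℝ) : ℂ) by norm_num]
  exact Complex.norm_cpow_eq_rpow_re_of_pos two_pos s

lemma one_lt_two_rpow (hs : 1 < s.re) : 1 < (2 : ℝ) ^ s.re :=
  Real.one_lt_rpow_iff_of_pos two_pos |>.mpr (Or.inl ⟨one_lt_two, by linarith⟩)

lemma two_cpow_sub_one_ne (hs : 1 < s.re) : (2 : ℂ) ^ s - 1 ≠ 0 := by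
  rw [sub_ne_zero]
  intro h
  have h1 := abs_two_cpow s
  rw [h] at h1
  simp only [norm_one] at h1
  have := one_lt_two_rpow hs
  linarith

lemma two_cpow_ne (s : ℂ) : (2 : ℂ) ^ s ≠ 0 := by
  simp [Complex.cpow_eq_zero_iff]

lemma r_norm (hs : 1 < s.re) : ‖((2 : ℂ) ^ s)⁻¹‖ < 1 := by
  rw [norm_inv, abs_two_cpow]
  have h := one_lt_two_rpow hs
  have h2 : (0:ℝ) < (2:ℝ) ^ s.re := by positivity
  rw [inv_lt_one_iff₀]
  right; exact h

lemma summable_rpow1 (hs : 1 < s.re) :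
    Summable (fun j : ℕ => (((2 : ℂ) ^ s)⁻¹) ^ (j + 1)) := by
  have := (summable_geometric_of_norm_lt_one (r_norm hs)).mul_left ((2 : ℂ) ^ s)⁻¹
  refine this.congr fun j => ?_
  rw [pow_succ, mul_comm]

lemma tsum_rpow1 (hs : 1 < s.re) :
    ∑' j : ℕ, (((2 : ℂ) ^ s)⁻¹) ^ (j + 1) = ((2 : ℂ) ^ s - 1)⁻¹ := by
  have h1 : ∀ j : ℕ, (((2 : ℂ) ^ s)⁻¹) ^ (j + 1) =
      ((2 : ℂ) ^ s)⁻¹ * (((2 : ℂ) ^ s)⁻¹) ^ j := fun j => by rw [pow_succ, mul_comm]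
  rw [tsum_congr h1, tsum_mul_left, tsum_geometric_of_norm_lt_one (r_norm hs)]
  have hx : (2 : ℂ) ^ s ≠ 0 := two_cpow_ne s
  have hy : (2 : ℂ) ^ s - 1 ≠ 0 := two_cpow_sub_one_ne hs
  field_simp
end

noncomputable def vterm (s : ℂ) (n : ℕ) : ℂ := (ArithmeticFunction.vonMangoldt n : ℂ) / (n : ℂ) ^ s

section
variable {s : ℂ}

lemma vterm_eq_term (s : ℂ) (n : ℕ) :
    LSeries.term (fun n => (ArithmeticFunction.vonMangoldt n : ℂ)) s n = vterm s n := by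
  rcases eq_or_ne n 0 with rfl | hn
  · simp [vterm, LSeries.term]
  · rw [LSeries.term_of_ne_zero hn, vterm]

lemma summable_vterm (hs : 1 < s.re) : Summable (vterm s) :=
  (ArithmeticFunction.LSeriesSummable_vonMangoldt hs).congr (vterm_eq_term s)

lemma tsum_vterm (hs : 1 < s.re) :
    ∑' n, vterm s n = -deriv riemannZeta s / riemannZeta s := by
  rw [← tsum_congr (vterm_eq_term s)]
  exact ArithmeticFunction.LSeries_vonMangoldt_eq_deriv_riemannZeta_div hs

lemma vterm_two_pow (s : ℂ) (a : ℕ) :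
    vterm s (2 ^ (a + 1)) = (Real.log 2 : ℂ) * (((2 : ℂ) ^ s)⁻¹) ^ (a + 1) := by
  rw [vterm, ArithmeticFunction.vonMangoldt_apply_pow (Nat.succ_ne_zero a),
    ArithmeticFunction.vonMangoldt_apply_prime Nat.prime_two]
  rw [nat_cpow_pow 2 (a + 1) s]
  rw [div_eq_mul_inv, ← inv_pow]
  norm_num

lemma summable_vterm_even (hs : 1 < s.re) : Summable (fun k => vterm s (2 * k)) :=
  (summable_vterm hs).comp_injective (mul_right_injective₀ two_ne_zero)

lemma summable_vterm_odd (hs : 1 < s.re) : Summable (fun k => vterm s (2 * k + 1)) :=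
  (summable_vterm hs).comp_injective (fun a b h => by omega)

lemma vterm_even_support :
    ∀ k ∉ Set.range (fun a : ℕ => 2 ^ a), vterm s (2 * k) = 0 := by
  intro k hk
  by_contra hne
  have hΛ : ArithmeticFunction.vonMangoldt (2 * k) ≠ 0 := by
    intro h
    apply hne
    rw [vterm, h]
    simp
  rw [ArithmeticFunction.vonMangoldt_ne_zero_iff] at hΛ
  obtain ⟨p, e, hp, he, heq⟩ := hΛ
  rw [← Nat.prime_iff] at hp
  have h2p : 2 ∣ p := by
    have : (2 : ℕ) ∣ p ^ e := heq ▸ Dvd.intro k rfl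
    exact Nat.Prime.dvd_of_dvd_pow Nat.prime_two this
  have hp2 : p = 2 := ((Nat.prime_dvd_prime_iff_eq Nat.prime_two hp).mp h2p).symm
  obtain ⟨e', rfl⟩ : ∃ e', e = e' + 1 := ⟨e - 1, by omega⟩
  apply hk
  refine ⟨e', ?_⟩
  have : 2 * k = 2 * 2 ^ e' := by rw [heq.symm, hp2, pow_succ, mul_comm]
  exact (Nat.eq_of_mul_eq_mul_left two_pos this).symm

lemma tsum_vterm_even (hs : 1 < s.re) :
    ∑' k, vterm s (2 * k) = (Real.log 2 : ℂ) * ((2 : ℂ) ^ s - 1)⁻¹ := by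
  have hinj : Function.Injective (fun a : ℕ => 2 ^ a) :=
    pow_right_injective₀ (by norm_num) (by norm_num)
  have hsupp : Function.support (fun k => vterm s (2 * k)) ⊆
      Set.range (fun a : ℕ => 2 ^ a) := by
    intro k hk
    by_contra h
    exact hk (vterm_even_support k h)
  rw [← Function.Injective.tsum_eq hinj hsupp]
  have h1 : ∀ a : ℕ, vterm s (2 * 2 ^ a) = (Real.log 2 : ℂ) * (((2 : ℂ) ^ s)⁻¹) ^ (a + 1) := by
    intro a
    rw [show 2 * 2 ^ a = 2 ^ (a + 1) by rw [pow_succ, mul_comm], vterm_two_pow]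
  rw [tsum_congr h1, tsum_mul_left, tsum_rpow1 hs]

lemma tsum_vterm_odd (hs : 1 < s.re) :
    ∑' k, vterm s (2 * k + 1) =
      -deriv riemannZeta s / riemannZeta s - (Real.log 2 : ℂ) * ((2 : ℂ) ^ s - 1)⁻¹ := by
  have h := tsum_even_add_odd (summable_vterm_even hs) (summable_vterm_odd hs)
  rw [tsum_vterm hs] at h
  rw [← h, tsum_vterm_even hs]
  ring
end

lemma ordfact (j q : ℕ) (hq0 : q ≠ 0) (hq2 : ¬ 2 ∣ q) :
    (2 ^ j * q).factorization 2 = j ∧ (2 ^ j * q) / 2 ^ ((2 ^ j * q).factorization 2) = q := by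
  have hne : 2 ^ j * q ≠ 0 := by positivity
  have hf : (2 ^ j * q).factorization 2 = j := by
    rw [Nat.factorization_mul (by positivity) hq0]
    rw [Nat.Prime.factorization_pow Nat.prime_two]
    simp [Nat.factorization_eq_zero_of_not_dvd hq2]
  refine ⟨hf, ?_⟩
  rw [hf, Nat.mul_div_cancel_left q (by positivity)]

noncomputable def Gterm (s : ℂ) (m : ℕ) : ℂ :=
  (ArithmeticFunction.vonMangoldt (m / 2 ^ (m.factorization 2)) : ℂ) / ((2 * m : ℕ) : ℂ) ^ s

noncomputable def Hterm (s : ℂ) (m : ℕ) : ℂ :=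
  (if m / 2 ^ (m.factorization 2) = 1 then (1 : ℂ) else 0) / ((2 * m : ℕ) : ℂ) ^ s

section
variable {s : ℂ}

lemma Hterm_pow2 (s : ℂ) (j : ℕ) : Hterm s (2 ^ j) = (((2 : ℂ) ^ s)⁻¹) ^ (j + 1) := by
  have h := ordfact j 1 one_ne_zero (by norm_num)
  rw [mul_one] at h
  rw [Hterm, h.2, if_pos rfl]
  rw [show 2 * 2 ^ j = 2 ^ (j + 1) by rw [pow_succ, mul_comm], nat_cpow_pow 2 (j + 1) s]
  rw [one_div, ← inv_pow]
  norm_num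

lemma Hterm_support : Function.support (Hterm s) ⊆ Set.range (fun j : ℕ => 2 ^ j) := by
  intro m hm
  rw [Function.mem_support] at hm
  have h1 : m / 2 ^ (m.factorization 2) = 1 := by
    by_contra h
    rw [Hterm, if_neg h] at hm
    simp at hm
  refine ⟨m.factorization 2, ?_⟩
  have := Nat.ordProj_mul_ordCompl_eq_self m 2
  rw [h1, mul_one] at this
  exact this

lemma summable_Hterm (hs : 1 < s.re) : Summable (Hterm s) := by
  have hinj : Function.Injective (fun j : ℕ => (2:ℕ) ^ j) :=
    pow_right_injective₀ (by norm_num) (by norm_num)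
  rw [← Function.Injective.summable_iff hinj (fun m hm => by
    by_contra h
    exact hm (Hterm_support (Function.mem_support.mpr h)))]
  exact (summable_rpow1 hs).congr (fun j => (Hterm_pow2 s j).symm)

lemma tsum_Hterm (hs : 1 < s.re) : ∑' m, Hterm s m = ((2 : ℂ) ^ s - 1)⁻¹ := by
  have hinj : Function.Injective (fun j : ℕ => (2:ℕ) ^ j) :=
    pow_right_injective₀ (by norm_num) (by norm_num)
  rw [← Function.Injective.tsum_eq hinj Hterm_support]
  rw [tsum_congr (fun j => Hterm_pow2 s j), tsum_rpow1 hs]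

lemma Gterm_e (s : ℂ) (j q : ℕ) :
    Gterm s (2 ^ j * (2 * q + 1)) =
      (((2 : ℂ) ^ s)⁻¹) ^ (j + 1) * vterm s (2 * q + 1) := by
  have h := ordfact j (2 * q + 1) (by omega) (by omega)
  rw [Gterm, h.2]
  rw [show 2 * (2 ^ j * (2 * q + 1)) = 2 ^ (j + 1) * (2 * q + 1) by ring]
  rw [nat_cpow_mul, nat_cpow_pow 2 (j + 1) s, vterm]
  rw [show ((2:ℕ):ℂ) = (2:ℂ) by norm_num]
  rw [div_eq_mul_inv, mul_inv, ← inv_pow, div_eq_mul_inv]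
  ring

lemma Gterm_support :
    Function.support (Gterm s) ⊆
      Set.range (fun p : ℕ × ℕ => 2 ^ p.1 * (2 * p.2 + 1)) := by
  intro m hm
  rw [Function.mem_support] at hm
  have hm0 : m ≠ 0 := by
    intro h
    apply hm
    rw [h, Gterm]
    simp
  have hodd : ¬ 2 ∣ (m / 2 ^ (m.factorization 2)) := Nat.not_dvd_ordCompl Nat.prime_two hm0
  have hpos : 0 < m / 2 ^ (m.factorization 2) := Nat.ordCompl_pos 2 hm0
  obtain ⟨q, hq⟩ : ∃ q, m / 2 ^ (m.factorization 2) = 2 * q + 1 := by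
    rcases Nat.even_or_odd (m / 2 ^ (m.factorization 2)) with h | h
    · exact absurd h.two_dvd hodd
    · obtain ⟨q, hq⟩ := h; exact ⟨q, hq⟩
  exact ⟨(m.factorization 2, q), by
    simp only [← hq]
    exact Nat.ordProj_mul_ordCompl_eq_self m 2⟩

lemma e_inj : Function.Injective (fun p : ℕ × ℕ => 2 ^ p.1 * (2 * p.2 + 1)) := by
  rintro ⟨j, q⟩ ⟨j', q'⟩ h
  simp only at h
  have h1 := ordfact j (2 * q + 1) (by omega) (by omega)
  have h2 := ordfact j' (2 * q' + 1) (by omega) (by omega)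
  have hj : j = j' := by rw [← h1.1, ← h2.1, h]
  have hq : 2 * q + 1 = 2 * q' + 1 := by
    rw [← h1.2, ← h2.2]
    rw [hj] at h ⊢
    rw [h]
  simp only [Prod.mk.injEq]
  omega

lemma summable_Ge (hs : 1 < s.re) :
    Summable (fun p : ℕ × ℕ => (((2 : ℂ) ^ s)⁻¹) ^ (p.1 + 1) * vterm s (2 * p.2 + 1)) := by
  apply summable_mul_of_summable_norm (f := fun j : ℕ => (((2 : ℂ) ^ s)⁻¹) ^ (j + 1))
    (g := fun q : ℕ => vterm s (2 * q + 1))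
  · exact (summable_rpow1 hs).norm
  · exact (summable_vterm_odd hs).norm

lemma summable_Gterm (hs : 1 < s.re) : Summable (Gterm s) := by
  rw [← Function.Injective.summable_iff e_inj (fun m hm => by
    by_contra h
    exact hm (Gterm_support (Function.mem_support.mpr h)))]
  exact (summable_Ge hs).congr (fun p => (Gterm_e s p.1 p.2).symm)

lemma tsum_Gterm (hs : 1 < s.re) :
    ∑' m, Gterm s m =
      ((2 : ℂ) ^ s - 1)⁻¹ *
        (-deriv riemannZeta s / riemannZeta s - (Real.log 2 : ℂ) * ((2 : ℂ) ^ s - 1)⁻¹) := by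
  rw [← Function.Injective.tsum_eq e_inj Gterm_support]
  have h1 : ∑' p : ℕ × ℕ, Gterm s (2 ^ p.1 * (2 * p.2 + 1)) =
      ∑' p : ℕ × ℕ, (((2 : ℂ) ^ s)⁻¹) ^ (p.1 + 1) * vterm s (2 * p.2 + 1) :=
    tsum_congr (fun p => Gterm_e s p.1 p.2)
  rw [h1, Summable.tsum_prod (summable_Ge hs)]
  have h2 : ∀ j : ℕ, ∑' q, (((2 : ℂ) ^ s)⁻¹) ^ (j + 1) * vterm s (2 * q + 1) =
      (((2 : ℂ) ^ s)⁻¹) ^ (j + 1) * (∑' q, vterm s (2 * q + 1)) := fun j => tsum_mul_left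
  rw [tsum_congr h2, tsum_mul_right, tsum_rpow1 hs, tsum_vterm_odd hs]
end

lemma Hfin (s : ℂ) (N : ℕ) :
    ∑ m ∈ Finset.range (N + 1), Hterm s m =
      ∑ j ∈ (Finset.range (N + 1)).filter (fun j => 2 ^ j ≤ N),
        (((2 : ℂ) ^ s)⁻¹) ^ (j + 1) := by
  classical
  rw [← Finset.sum_filter_of_ne (p := fun m => m / 2 ^ (m.factorization 2) = 1)
    (fun m _ hne => by
      by_contra h
      rw [Hterm, if_neg h] at hne
      simp at hne)]
  refine Finset.sum_nbij' (fun m => m.factorization 2) (fun j => 2 ^ j) ?_ ?_ ?_ ?_ ?_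
  · intro m hm
    simp only [Finset.mem_filter, Finset.mem_range] at hm ⊢
    obtain ⟨hmN, h1⟩ := hm
    have hm2 : 2 ^ (m.factorization 2) = m := by
      have := Nat.ordProj_mul_ordCompl_eq_self m 2
      rw [h1, mul_one] at this
      exact this
    constructor
    · calc m.factorization 2 < 2 ^ (m.factorization 2) := Nat.lt_two_pow_self
        _ = m := hm2
        _ < N + 1 := hmN
    · rw [hm2]; omega
  · intro j hj
    simp only [Finset.mem_filter, Finset.mem_range] at hj ⊢
    have h := ordfact j 1 one_ne_zero (by norm_num)
    rw [mul_one] at h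
    exact ⟨by omega, h.2⟩
  · intro m hm
    simp only [Finset.mem_filter, Finset.mem_range] at hm
    have := Nat.ordProj_mul_ordCompl_eq_self m 2
    rw [hm.2, mul_one] at this
    exact this
  · intro j hj
    have h := ordfact j 1 one_ne_zero (by norm_num)
    rw [mul_one] at h
    exact h.1
  · intro m hm
    simp only [Finset.mem_filter, Finset.mem_range] at hm
    have hm2 : 2 ^ (m.factorization 2) = m := by
      have := Nat.ordProj_mul_ordCompl_eq_self m 2
      rw [hm.2, mul_one] at this
      exact this
    rw [← Hterm_pow2 s (m.factorization 2), hm2]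

lemma Gterm_ppow (s : ℂ) (j k p : ℕ) (hp : p.Prime) (hp2 : p ≠ 2) (hk : k ≠ 0) :
    Gterm s (2 ^ j * p ^ k) =
      (Real.log p : ℂ) * (((2 : ℂ) ^ s)⁻¹) ^ (j + 1) * (((p : ℂ) ^ s)⁻¹) ^ k := by
  have hq2 : ¬ 2 ∣ p ^ k := by
    intro h
    exact hp2 (((Nat.prime_dvd_prime_iff_eq Nat.prime_two hp).mp
      (Nat.Prime.dvd_of_dvd_pow Nat.prime_two h)).symm)
  have h := ordfact j (p ^ k) (pow_ne_zero k hp.ne_zero) hq2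
  rw [Gterm, h.2, ArithmeticFunction.vonMangoldt_apply_pow hk,
    ArithmeticFunction.vonMangoldt_apply_prime hp]
  rw [show 2 * (2 ^ j * p ^ k) = 2 ^ (j + 1) * p ^ k by ring]
  rw [nat_cpow_mul, nat_cpow_pow 2 (j + 1) s, nat_cpow_pow p k s]
  rw [show ((2:ℕ):ℂ) = (2:ℂ) by norm_num]
  rw [div_eq_mul_inv, mul_inv, ← inv_pow, ← inv_pow]
  ring

lemma ppow_struct (q : ℕ) (hq : IsPrimePow q) :
    q.minFac.Prime ∧ q.factorization q.minFac ≠ 0 ∧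
      q.minFac ^ (q.factorization q.minFac) = q := by
  obtain ⟨p, k, hp, hk, rfl⟩ := hq
  rw [← Nat.prime_iff] at hp
  have hmf : (p ^ k).minFac = p := by
    rw [Nat.pow_minFac hk.ne', Nat.Prime.minFac_eq hp]
  have hfac : (p ^ k).factorization p = k := by
    rw [Nat.Prime.factorization_pow hp, Finsupp.single_eq_same]
  rw [hmf, hfac]
  exact ⟨hp, hk.ne', rfl⟩

lemma Gfin (s : ℂ) (N : ℕ) :
    ∑ m ∈ Finset.range (N + 1), Gterm s m =
      ∑ x ∈ (Finset.range (N + 1) ×ˢ Finset.range (N + 1) ×ˢ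
          Finset.range (N + 1)).filter
          (fun x => Nat.Prime x.2.2 ∧ x.2.2 ≠ 2 ∧ 1 ≤ x.2.1 ∧
            2 ^ x.1 * x.2.2 ^ x.2.1 ≤ N),
        (Real.log x.2.2 : ℂ) * (((2 : ℂ) ^ s)⁻¹) ^ (x.1 + 1) *
          (((x.2.2 : ℂ) ^ s)⁻¹) ^ x.2.1 := by
  classical
  rw [← Finset.sum_filter_of_ne (p := fun m => m ≠ 0 ∧
      ArithmeticFunction.vonMangoldt (m / 2 ^ (m.factorization 2)) ≠ 0)
    (fun m _ hne => by
      constructor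
      · intro h
        apply hne
        rw [h, Gterm]
        simp
      · intro h
        apply hne
        rw [Gterm, h]
        simp)]
  -- structure facts for filtered m
  have struct : ∀ m : ℕ, m ≠ 0 →
      ArithmeticFunction.vonMangoldt (m / 2 ^ (m.factorization 2)) ≠ 0 →
      (m / 2 ^ (m.factorization 2)).minFac.Prime ∧
      (m / 2 ^ (m.factorization 2)).minFac ≠ 2 ∧
      (m / 2 ^ (m.factorization 2)).factorization (m / 2 ^ (m.factorization 2)).minFac ≠ 0 ∧
      (m / 2 ^ (m.factorization 2)).minFac ^
        ((m / 2 ^ (m.factorization 2)).factorization (m / 2 ^ (m.factorization 2)).minFac) =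
        m / 2 ^ (m.factorization 2) := by
    intro m hm hΛ
    rw [ArithmeticFunction.vonMangoldt_ne_zero_iff] at hΛ
    obtain ⟨hp, hk, hpk⟩ := ppow_struct _ hΛ
    refine ⟨hp, ?_, hk, hpk⟩
    intro h2
    apply Nat.not_dvd_ordCompl Nat.prime_two hm
    have hd := Nat.minFac_dvd (m / 2 ^ (m.factorization 2))
    rwa [h2] at hd
  refine Finset.sum_nbij'
    (fun m => (m.factorization 2,
      ((m / 2 ^ (m.factorization 2)).factorization (m / 2 ^ (m.factorization 2)).minFac,
        (m / 2 ^ (m.factorization 2)).minFac)))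
    (fun x => 2 ^ x.1 * x.2.2 ^ x.2.1) ?_ ?_ ?_ ?_ ?_
  · intro m hm
    simp only [Finset.mem_filter, Finset.mem_range, Finset.mem_product] at hm ⊢
    obtain ⟨hmN, hm0, hΛ⟩ := hm
    obtain ⟨hp, hp2, hk, hpk⟩ := struct m hm0 hΛ
    set q := m / 2 ^ (m.factorization 2) with hqdef
    set p := q.minFac
    set k := q.factorization p
    set ν := m.factorization 2
    have hm' : 2 ^ ν * q = m := Nat.ordProj_mul_ordCompl_eq_self m 2
    have hqm : q ≤ m := Nat.le_of_dvd (Nat.pos_of_ne_zero hm0) (Nat.ordCompl_dvd m 2)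
    have h2m : 2 ^ ν ≤ m := Nat.le_of_dvd (Nat.pos_of_ne_zero hm0) (Nat.ordProj_dvd m 2)
    have hpq : p ^ k = q := hpk
    have hνN : ν < N + 1 := by
      have := Nat.lt_two_pow_self (n := ν)
      omega
    have hkN : k < N + 1 := by
      have h1 : k < 2 ^ k := Nat.lt_two_pow_self (n := k)
      have h2 : 2 ^ k ≤ p ^ k := Nat.pow_le_pow_left hp.two_le k
      omega
    have hpN : p < N + 1 := by
      have : p ≤ p ^ k := Nat.le_self_pow hk p
      omega
    refine ⟨⟨hνN, hkN, hpN⟩, hp, hp2, Nat.one_le_iff_ne_zero.mpr hk, ?_⟩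
    rw [hpq, hm']
    omega
  · intro x hx
    simp only [Finset.mem_filter, Finset.mem_range, Finset.mem_product] at hx ⊢
    obtain ⟨-, hp, hp2, hk, hle⟩ := hx
    have hq2 : ¬ 2 ∣ x.2.2 ^ x.2.1 := by
      intro h
      exact hp2 (((Nat.prime_dvd_prime_iff_eq Nat.prime_two hp).mp
        (Nat.Prime.dvd_of_dvd_pow Nat.prime_two h)).symm)
    have h := ordfact x.1 (x.2.2 ^ x.2.1) (pow_ne_zero _ hp.ne_zero) hq2
    refine ⟨by omega, Nat.mul_ne_zero (by positivity) (pow_ne_zero _ hp.ne_zero), ?_⟩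
    rw [h.2, ArithmeticFunction.vonMangoldt_apply_pow (by omega),
      ArithmeticFunction.vonMangoldt_apply_prime hp]
    have : (1 : ℝ) < (x.2.2 : ℝ) := by exact_mod_cast hp.one_lt
    exact ne_of_gt (Real.log_pos this)
  · intro m hm
    simp only [Finset.mem_filter, Finset.mem_range] at hm
    obtain ⟨hmN, hm0, hΛ⟩ := hm
    obtain ⟨hp, hp2, hk, hpk⟩ := struct m hm0 hΛ
    dsimp only
    rw [hpk]
    exact Nat.ordProj_mul_ordCompl_eq_self m 2
  · intro x hx
    simp only [Finset.mem_filter, Finset.mem_range, Finset.mem_product] at hx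
    obtain ⟨-, hp, hp2, hk, hle⟩ := hx
    have hq2 : ¬ 2 ∣ x.2.2 ^ x.2.1 := by
      intro h
      exact hp2 (((Nat.prime_dvd_prime_iff_eq Nat.prime_two hp).mp
        (Nat.Prime.dvd_of_dvd_pow Nat.prime_two h)).symm)
    have h := ordfact x.1 (x.2.2 ^ x.2.1) (pow_ne_zero _ hp.ne_zero) hq2
    have hmf : (x.2.2 ^ x.2.1).minFac = x.2.2 := by
      rw [Nat.pow_minFac (by omega), Nat.Prime.minFac_eq hp]
    have hfac : (x.2.2 ^ x.2.1).factorization x.2.2 = x.2.1 := by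
      rw [Nat.Prime.factorization_pow hp, Finsupp.single_eq_same]
    rw [Prod.ext_iff, Prod.ext_iff]
    refine ⟨h.1, ?_, ?_⟩ <;> simp only [h.2, hmf, hfac]
  · intro m hm
    simp only [Finset.mem_filter, Finset.mem_range] at hm
    obtain ⟨hmN, hm0, hΛ⟩ := hm
    obtain ⟨hp, hp2, hk, hpk⟩ := struct m hm0 hΛ
    dsimp only
    conv_lhs => rw [← Nat.ordProj_mul_ordCompl_eq_self m 2, ← hpk]
    exact Gterm_ppow s _ _ _ hp hp2 hk


theorem A_closed_form_odd (D : ℕ) (hD : 0 < D) (hodd : Odd D) (w : ℂ) (hw : 1 / 2 < w.re) :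
    ∑' n : ℕ, (mulog2 (4 * (n + D / 2 + 1) ^ 2) : ℂ) /
        ((2 * (n + D / 2 + 1) : ℕ) : ℂ) ^ (2 * w) =
      -2 * (Real.log 2 : ℂ) * (((2 : ℂ) ^ (2 * w) - 1)⁻¹ *
          (deriv riemannZeta (2 * w) / riemannZeta (2 * w) +
            (Real.log 2 : ℂ) / ((2 : ℂ) ^ (2 * w) - 1)) +
        ∑ x ∈ (Finset.range (D / 2 + 1) ×ˢ Finset.range (D / 2 + 1) ×ˢ
            Finset.range (D / 2 + 1)).filter
            (fun x => Nat.Prime x.2.2 ∧ x.2.2 ≠ 2 ∧ 1 ≤ x.2.1 ∧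
              2 ^ x.1 * x.2.2 ^ x.2.1 ≤ D / 2),
          (Real.log x.2.2 : ℂ) * (2 : ℂ) ^ (-2 * ((x.1 : ℂ) + 1) * w) *
            (x.2.2 : ℂ) ^ (-2 * (x.2.1 : ℂ) * w)) -
      (Real.log 2 : ℂ) ^ 2 * (((2 : ℂ) ^ (2 * w) - 1)⁻¹ -
        ∑ j ∈ (Finset.range (D / 2 + 1)).filter (fun j => 2 ^ j ≤ D / 2),
          (2 : ℂ) ^ (-2 * ((j : ℂ) + 1) * w)) := by
  classical
  have hs : 1 < (2 * w).re := by
    have h : (2 * w).re = 2 * w.re := by simp [Complex.mul_re]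
    rw [h]; linarith
  set s : ℂ := 2 * w with hsdef
  set N : ℕ := D / 2 with hNdef
  -- pointwise decomposition
  have hFdecomp : ∀ m : ℕ, (mulog2 (4 * m ^ 2) : ℂ) / ((2 * m : ℕ) : ℂ) ^ s =
      2 * (Real.log 2 : ℂ) * Gterm s m - (Real.log 2 : ℂ) ^ 2 * Hterm s m := by
    intro m
    rcases eq_or_ne m 0 with rfl | hm
    · simp [mulog2, Gterm, Hterm]
    · rw [mulog2_4sq m hm, Gterm, Hterm]
      push_cast [apply_ite (Complex.ofReal)]
      ring
  have hF : Summable (fun m : ℕ => (mulog2 (4 * m ^ 2) : ℂ) / ((2 * m : ℕ) : ℂ) ^ s) := by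
    refine Summable.congr ?_ (fun m => (hFdecomp m).symm)
    exact ((summable_Gterm hs).mul_left _).sub ((summable_Hterm hs).mul_left _)
  have key := Summable.sum_add_tsum_nat_add
    (f := fun m : ℕ => (mulog2 (4 * m ^ 2) : ℂ) / ((2 * m : ℕ) : ℂ) ^ s) (N + 1) hF
  have hLHS : ∑' n : ℕ, (mulog2 (4 * (n + D / 2 + 1) ^ 2) : ℂ) /
      ((2 * (n + D / 2 + 1) : ℕ) : ℂ) ^ (2 * w) =
      ∑' n : ℕ, (mulog2 (4 * (n + (N + 1)) ^ 2) : ℂ) / ((2 * (n + (N + 1)) : ℕ) : ℂ) ^ s := by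
    refine tsum_congr fun n => ?_
    rw [show n + D / 2 + 1 = n + (N + 1) by omega]
  rw [hLHS]
  have hshift : ∑' n : ℕ, (mulog2 (4 * (n + (N + 1)) ^ 2) : ℂ) /
      ((2 * (n + (N + 1)) : ℕ) : ℂ) ^ s =
      (∑' m : ℕ, (mulog2 (4 * m ^ 2) : ℂ) / ((2 * m : ℕ) : ℂ) ^ s) -
        ∑ m ∈ Finset.range (N + 1), (mulog2 (4 * m ^ 2) : ℂ) / ((2 * m : ℕ) : ℂ) ^ s := by
    rw [← key]; ring
  rw [hshift]
  -- total tsum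
  have htot : ∑' m : ℕ, (mulog2 (4 * m ^ 2) : ℂ) / ((2 * m : ℕ) : ℂ) ^ s =
      2 * (Real.log 2 : ℂ) * (∑' m, Gterm s m) -
        (Real.log 2 : ℂ) ^ 2 * (∑' m, Hterm s m) := by
    rw [tsum_congr hFdecomp]
    rw [Summable.tsum_sub ((summable_Gterm hs).mul_left _) ((summable_Hterm hs).mul_left _),
      tsum_mul_left, tsum_mul_left]
  have hfin : ∑ m ∈ Finset.range (N + 1), (mulog2 (4 * m ^ 2) : ℂ) / ((2 * m : ℕ) : ℂ) ^ s =
      2 * (Real.log 2 : ℂ) * (∑ m ∈ Finset.range (N + 1), Gterm s m) -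
        (Real.log 2 : ℂ) ^ 2 * (∑ m ∈ Finset.range (N + 1), Hterm s m) := by
    rw [Finset.sum_congr rfl (fun m _ => hFdecomp m), Finset.sum_sub_distrib,
      ← Finset.mul_sum, ← Finset.mul_sum]
  rw [htot, hfin, tsum_Gterm hs, tsum_Hterm hs, Gfin s N, Hfin s N]
  -- exponent conversion on RHS
  have hexp2 : ∀ j : ℕ, (2 : ℂ) ^ (-2 * ((j : ℂ) + 1) * w) = (((2 : ℂ) ^ s)⁻¹) ^ (j + 1) := by
    intro j
    rw [show -2 * ((j : ℂ) + 1) * w = ((j + 1 : ℕ) : ℂ) * (-(2 * w)) by push_cast; ring]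
    rw [Complex.cpow_nat_mul, Complex.cpow_neg]
  have hexpp : ∀ p k : ℕ, (p : ℂ) ^ (-2 * ((k : ℂ)) * w) = (((p : ℂ) ^ s)⁻¹) ^ k := by
    intro p k
    rw [show -2 * ((k : ℂ)) * w = ((k : ℕ) : ℂ) * (-(2 * w)) by push_cast; ring]
    rw [Complex.cpow_nat_mul, Complex.cpow_neg]
  have hsum1 : ∑ x ∈ (Finset.range (N + 1) ×ˢ Finset.range (N + 1) ×ˢ
        Finset.range (N + 1)).filter
        (fun x => Nat.Prime x.2.2 ∧ x.2.2 ≠ 2 ∧ 1 ≤ x.2.1 ∧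
          2 ^ x.1 * x.2.2 ^ x.2.1 ≤ N),
      (Real.log x.2.2 : ℂ) * (2 : ℂ) ^ (-2 * ((x.1 : ℂ) + 1) * w) *
        (x.2.2 : ℂ) ^ (-2 * (x.2.1 : ℂ) * w) =
      ∑ x ∈ (Finset.range (N + 1) ×ˢ Finset.range (N + 1) ×ˢ
          Finset.range (N + 1)).filter
          (fun x => Nat.Prime x.2.2 ∧ x.2.2 ≠ 2 ∧ 1 ≤ x.2.1 ∧
            2 ^ x.1 * x.2.2 ^ x.2.1 ≤ N),
        (Real.log x.2.2 : ℂ) * (((2 : ℂ) ^ s)⁻¹) ^ (x.1 + 1) *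
          (((x.2.2 : ℂ) ^ s)⁻¹) ^ x.2.1 :=
    Finset.sum_congr rfl (fun x _ => by rw [hexp2 x.1, hexpp x.2.2 x.2.1])
  have hsum2 : ∑ j ∈ (Finset.range (N + 1)).filter (fun j => 2 ^ j ≤ N),
      (2 : ℂ) ^ (-2 * ((j : ℂ) + 1) * w) =
      ∑ j ∈ (Finset.range (N + 1)).filter (fun j => 2 ^ j ≤ N),
        (((2 : ℂ) ^ s)⁻¹) ^ (j + 1) :=
    Finset.sum_congr rfl (fun j _ => hexp2 j)
  rw [hsum1, hsum2]
  ring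
end

section
/- Let D be a positive even integer with D mod 6 ≠ 4 and let s be a complex number with Re(s) > −1/2. Then the series ∑_{a=⌊D/6⌋+1}^∞ ( (9(2a−1)² − D²)^{−s} − (9(2a−1)²)^{−s} ) converges absolutely. -/
open Set

/-- MVT bound for differences of complex powers of reals. -/
lemma cpow_sub_cpow_norm_le (s : ℂ) (hs1 : -s.re - 1 ≤ 0) {x y : ℝ} (hx : 0 < x)
    (hxy : x ≤ y) :
    ‖(y : ℂ) ^ (-s) - (x : ℂ) ^ (-s)‖ ≤ ‖s‖ * x ^ (-s.re - 1) * (y - x) := by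
  have hd : ∀ t ∈ Icc x y, HasDerivWithinAt (fun t : ℝ => (t : ℂ) ^ (-s))
      (-s * (t : ℂ) ^ (-s - 1)) (Icc x y) t := by
    intro t ht
    have htpos : 0 < t := lt_of_lt_of_le hx ht.1
    exact ((Complex.hasStrictDerivAt_cpow_const
      (Complex.ofReal_mem_slitPlane.2 htpos)).hasDerivAt.comp_ofReal).hasDerivWithinAt
  have bound : ∀ t ∈ Ico x y, ‖-s * (t : ℂ) ^ (-s - 1)‖ ≤ ‖s‖ * x ^ (-s.re - 1) := by
    intro t ht
    have htpos : 0 < t := lt_of_lt_of_le hx ht.1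
    rw [norm_mul, norm_neg]
    have h1 : ‖(t : ℂ) ^ (-s - 1)‖ = t ^ (-s.re - 1) := by
      rw [Complex.norm_cpow_eq_rpow_re_of_pos htpos]
      norm_num
    rw [h1]
    exact mul_le_mul_of_nonneg_left
      (Real.rpow_le_rpow_of_nonpos hx ht.1 hs1) (norm_nonneg s)
  simpa using norm_image_sub_le_of_norm_deriv_le_segment' hd bound y (right_mem_Icc.2 hxy)

theorem qD_abs_convergence_even (D : ℕ) (hD : 0 < D) (heven : 2 ∣ D) (hmod : D % 6 ≠ 4)
    (s : ℂ) (hs : -(1 / 2) < s.re) :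
    Summable (fun a : ℕ =>
      ‖(9 * ((2 * (a + D / 6 + 1) - 1 : ℕ) : ℂ) ^ 2 - (D : ℂ) ^ 2) ^ (-s) -
        (9 * ((2 * (a + D / 6 + 1) - 1 : ℕ) : ℂ) ^ 2) ^ (-s)‖) := by
  have hs1 : -s.re - 1 ≤ 0 := by linarith
  -- D ≤ 6 * (D / 6) + 2
  have hDle : D ≤ 6 * (D / 6) + 2 := by
    have h6 : 6 * (D / 6) + D % 6 = D := Nat.div_add_mod D 6
    have hlt : D % 6 < 6 := Nat.mod_lt _ (by norm_num)
    have hevenmod : D % 6 % 2 = 0 := by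
      obtain ⟨k, rfl⟩ := heven
      omega
    omega
  set e : ℝ := -s.re - 1 with he
  -- pointwise bound
  have key : ∀ a : ℕ,
      ‖(9 * ((2 * (a + D / 6 + 1) - 1 : ℕ) : ℂ) ^ 2 - (D : ℂ) ^ 2) ^ (-s) -
        (9 * ((2 * (a + D / 6 + 1) - 1 : ℕ) : ℂ) ^ 2) ^ (-s)‖ ≤
      ‖s‖ * (D : ℝ) ^ 2 * ((a : ℝ) + 1) ^ (2 * e) := by
    intro a
    set n : ℕ := 2 * (a + D / 6 + 1) - 1 with hn
    have hn' : (n : ℝ) = 2 * (a : ℝ) + 2 * (D / 6 : ℕ) + 1 := by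
      have : n = 2 * a + 2 * (D / 6) + 1 := by omega
      rw [this]; push_cast; ring
    have h3n : (D : ℝ) + (6 * a + 1) ≤ 3 * (n : ℝ) := by
      rw [hn']
      have : (D : ℝ) ≤ 6 * (D / 6 : ℕ) + 2 := by exact_mod_cast hDle
      linarith
    have haD : (0:ℝ) ≤ (D:ℝ) := Nat.cast_nonneg D
    have ha1 : (0:ℝ) < (a : ℝ) + 1 := by positivity
    have hXg : ((a : ℝ) + 1) ^ 2 ≤ 9 * (n : ℝ) ^ 2 - (D : ℝ) ^ 2 := by
      have h1 : (a : ℝ) + 1 ≤ 3 * (n:ℝ) - D := by linarith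
      have h2 : (a : ℝ) + 1 ≤ 3 * (n:ℝ) + D := by linarith
      nlinarith
    have hXpos : (0:ℝ) < 9 * (n : ℝ) ^ 2 - (D : ℝ) ^ 2 :=
      lt_of_lt_of_le (by positivity) hXg
    have hXY : 9 * (n : ℝ) ^ 2 - (D : ℝ) ^ 2 ≤ 9 * (n : ℝ) ^ 2 := by
      nlinarith [sq_nonneg (D:ℝ)]
    have hcast1 : (9 * ((n : ℕ) : ℂ) ^ 2 - (D : ℂ) ^ 2)
        = (((9 * (n : ℝ) ^ 2 - (D : ℝ) ^ 2) : ℝ) : ℂ) := by push_cast; ring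
    have hcast2 : (9 * ((n : ℕ) : ℂ) ^ 2) = (((9 * (n : ℝ) ^ 2) : ℝ) : ℂ) := by
      push_cast; ring
    rw [hcast1, hcast2, ← norm_neg, neg_sub]
    have hmvt := cpow_sub_cpow_norm_le s hs1 hXpos hXY
    rw [show 9 * (n : ℝ) ^ 2 - (9 * (n : ℝ) ^ 2 - (D : ℝ) ^ 2) = (D:ℝ)^2 by ring] at hmvt
    refine hmvt.trans ?_
    have h1 : (9 * (n : ℝ) ^ 2 - (D : ℝ) ^ 2) ^ e ≤ (((a : ℝ) + 1) ^ 2) ^ e :=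
      Real.rpow_le_rpow_of_nonpos (by positivity) hXg hs1
    have h2 : (((a : ℝ) + 1) ^ 2) ^ e = ((a : ℝ) + 1) ^ (2 * e) := by
      rw [← Real.rpow_natCast ((a:ℝ)+1) 2, ← Real.rpow_mul (le_of_lt ha1)]
      norm_num
    have h3 : (9 * (n : ℝ) ^ 2 - (D : ℝ) ^ 2) ^ e ≤ ((a : ℝ) + 1) ^ (2 * e) :=
      h2 ▸ h1
    have hXe : (0:ℝ) ≤ (9 * (n : ℝ) ^ 2 - (D : ℝ) ^ 2) ^ e :=
      Real.rpow_nonneg (le_of_lt hXpos) e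
    nlinarith [norm_nonneg s, sq_nonneg (D:ℝ),
      mul_le_mul_of_nonneg_left h3 (mul_nonneg (sq_nonneg (D:ℝ)) (norm_nonneg s))]
  -- summability of the majorant
  have hsum : Summable (fun a : ℕ => ‖s‖ * (D : ℝ) ^ 2 * ((a : ℝ) + 1) ^ (2 * e)) := by
    apply Summable.mul_left
    have hp : 2 * e < -1 := by simp only [he]; linarith
    have h := (Real.summable_nat_rpow (p := 2 * e)).2 hp
    have h2 := (summable_nat_add_iff (f := fun n : ℕ => (n : ℝ) ^ (2 * e)) 1).2 h
    refine h2.congr fun a => ?_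
    push_cast
    ring_nf
  exact Summable.of_nonneg_of_le (fun a => norm_nonneg _) key hsum
end
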